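/- arXiv:1903.03677 — 6 statements merged into one kernel-verified Lean document; each statement's English description precedes it below -/
import Mathlib

section
/- Let U ⊆ ℝ² be open and connected, and let φ, φ̃ : U → ℝ³ be smooth immersions which have the same induced metric (∂_iφ·∂_jφ = ∂_iφ̃·∂_jφ̃ on U) and the same second fundamental form (n·∂_i∂_jφ = ñ·∂_i∂_jφ̃ on U, where n, ñ are the respective unit normals). Then there exist Q ∈ SO(3) and b ∈ ℝ³ such that φ̃(p) = Q φ(p) + b for all p ∈ U; i.e., φ is unique up to rigid motion given its first and second fundamental forms. -/
noncomputable section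
open Matrix Real

/-- Points of the parameter domain `U ⊆ ℝ²`. -/
abbrev Pt : Type := Fin 2 → ℝ
/-- Vectors in `ℝ³`. -/
abbrev Vec3 : Type := Fin 3 → ℝ

/-- Partial derivative `∂ᵢ` of a scalar function on `ℝ²`. -/
def pd (i : Fin 2) (f : Pt → ℝ) : Pt → ℝ :=
  fun p => fderiv ℝ f p (Pi.single i 1)

/-- Partial derivative `∂ᵢ` of an `ℝ³`-valued function on `ℝ²`. -/
def pdV (i : Fin 2) (f : Pt → Vec3) : Pt → Vec3 :=
  fun p => fderiv ℝ f p (Pi.single i 1)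

/-- The induced metric (first fundamental form) `gᵢⱼ = ∂ᵢφ ⬝ ∂ⱼφ` of a map `φ : ℝ² → ℝ³`. -/
def indMetric (φ : Pt → Vec3) : Pt → Matrix (Fin 2) (Fin 2) ℝ :=
  fun p => Matrix.of fun i j => pdV i φ p ⬝ᵥ pdV j φ p

/-- The unit normal `n = (∂₁φ × ∂₂φ)/‖∂₁φ × ∂₂φ‖`. -/
def unitNormal (φ : Pt → Vec3) : Pt → Vec3 :=
  fun p => (Real.sqrt ((crossProduct (pdV 0 φ p) (pdV 1 φ p)) ⬝ᵥ
      (crossProduct (pdV 0 φ p) (pdV 1 φ p))))⁻¹ •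
    crossProduct (pdV 0 φ p) (pdV 1 φ p)

/-- The second fundamental form `hᵢⱼ = n ⬝ ∂ᵢ∂ⱼφ`. -/
def sff (φ : Pt → Vec3) : Pt → Matrix (Fin 2) (Fin 2) ℝ :=
  fun p => Matrix.of fun i j => unitNormal φ p ⬝ᵥ pdV i (pdV j φ) p

/-- Christoffel symbols `Γ^k_{ij}` of a metric `g`. -/
def christoffel (g : Pt → Matrix (Fin 2) (Fin 2) ℝ) (k i j : Fin 2) : Pt → ℝ :=
  fun p => (1/2) * ∑ l, (g p)⁻¹ k l *
    (pd i (fun q => g q j l) p + pd j (fun q => g q i l) p - pd l (fun q => g q i j) p)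

/-- Covariant derivative `∇ᵢ h_{jk}` of a symmetric 2-tensor `h` with respect to `g`. -/
def covD (g h : Pt → Matrix (Fin 2) (Fin 2) ℝ) (i j k : Fin 2) : Pt → ℝ :=
  fun p => pd i (fun q => h q j k) p
    - ∑ l, christoffel g l i j p * h p l k
    - ∑ l, christoffel g l i k p * h p j l

/-- Covariant Hessian `(∇²u)ᵢⱼ = ∂ᵢ∂ⱼu − Σₖ Γ^k_{ij} ∂ₖu`. -/
def hess (g : Pt → Matrix (Fin 2) (Fin 2) ℝ) (u : Pt → ℝ) (i j : Fin 2) : Pt → ℝ :=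
  fun p => pd i (pd j u) p - ∑ k, christoffel g k i j p * pd k u p

/-- The curvature component `R₁₂₁₂` of a metric `g` (indices `1,2` rendered as `0,1`). -/
def R1212 (g : Pt → Matrix (Fin 2) (Fin 2) ℝ) : Pt → ℝ :=
  fun p => ∑ m, g p 0 m *
    (pd 0 (christoffel g m 1 1) p - pd 1 (christoffel g m 1 0) p +
      ∑ l, (christoffel g m 0 l p * christoffel g l 1 1 p -
            christoffel g m 1 l p * christoffel g l 1 0 p))

/-- The Gauss curvature `K = R₁₂₁₂ / det g` of a metric `g`. -/
def gaussK (g : Pt → Matrix (Fin 2) (Fin 2) ℝ) : Pt → ℝ :=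
  fun p => R1212 g p / (g p).det

/-- The squared norm `|du|²_g = Σᵢⱼ g^{ij} ∂ᵢu ∂ⱼu`. -/
def gradSq (g : Pt → Matrix (Fin 2) (Fin 2) ℝ) (u : Pt → ℝ) : Pt → ℝ :=
  fun p => ∑ i, ∑ j, (g p)⁻¹ i j * pd i u p * pd j u p

/-- `g` is a smooth Riemannian metric on `U`: smooth entries, symmetric and
positive definite at each point of `U`. -/
def IsMetricOn (g : Pt → Matrix (Fin 2) (Fin 2) ℝ) (U : Set Pt) : Prop :=
  (∀ i j, ContDiffOn ℝ (⊤ : ℕ∞) (fun p => g p i j) U) ∧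
  (∀ p ∈ U, (g p).IsSymm ∧ (g p).PosDef)

/-- `φ` is a smooth immersion on `U`. -/
def IsImmersionOn (φ : Pt → Vec3) (U : Set Pt) : Prop :=
  ContDiffOn ℝ (⊤ : ℕ∞) φ U ∧
  ∀ p ∈ U, LinearIndependent ℝ ![pdV 0 φ p, pdV 1 φ p]

lemma vec2_decomp (v : Pt) : v = v 0 • (Pi.single 0 1 : Pt) + v 1 • (Pi.single 1 1 : Pt) := by
  funext j; fin_cases j <;> simp

-- fderiv = 0 from pd = 0
lemma fderiv_zero_of_pd_zero {f : Pt → ℝ} {p : Pt} (hf : DifferentiableAt ℝ f p)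
    (h : ∀ k, pd k f p = 0) : fderiv ℝ f p = 0 := by
  ext v
  have := congrArg (fderiv ℝ f p) (vec2_decomp v)
  rw [map_add, _root_.map_smul, _root_.map_smul] at this
  have h0 := h 0; have h1 := h 1
  simp only [pd] at h0 h1
  simp [this, h0, h1]

-- constancy on open preconnected set
lemma const_of_pd_zero {U : Set Pt} (hU : IsOpen U) (hUc : IsPreconnected U)
    {f : Pt → ℝ} (hf : ∀ p ∈ U, DifferentiableAt ℝ f p)
    (h0 : ∀ p ∈ U, ∀ k, pd k f p = 0) {x y : Pt} (hx : x ∈ U) (hy : y ∈ U) : f x = f y := by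
  have hloc : ∀ p ∈ U, ∃ ε > 0, ∀ q ∈ Metric.ball p ε, f q = f p := by
    intro p hp
    obtain ⟨ε, hε, hball⟩ := Metric.isOpen_iff.1 hU p hp
    refine ⟨ε, hε, fun q hq => ?_⟩
    refine (convex_ball p ε).is_const_of_fderivWithin_eq_zero
      (fun z hz => (hf z (hball hz)).differentiableWithinAt) ?_ hq (Metric.mem_ball_self hε)
    intro z hz
    rw [fderivWithin_of_isOpen Metric.isOpen_ball hz]
    exact fderiv_zero_of_pd_zero (hf z (hball hz)) (h0 z (hball hz))
  -- clopen argument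
  set V := {q : Pt | q ∈ U ∧ f q = f x} with hV
  set W := {q : Pt | q ∈ U ∧ f q ≠ f x} with hW
  have hVo : IsOpen V := by
    rw [Metric.isOpen_iff]
    rintro q ⟨hqU, hqf⟩
    obtain ⟨ε, hε, hc⟩ := hloc q hqU
    obtain ⟨ε', hε', hball⟩ := Metric.isOpen_iff.1 hU q hqU
    refine ⟨min ε ε', lt_min hε hε', fun r hr => ?_⟩
    have hr1 : r ∈ Metric.ball q ε := Metric.ball_subset_ball (min_le_left _ _) hr
    have hr2 : r ∈ U := hball (Metric.ball_subset_ball (min_le_right _ _) hr)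
    exact ⟨hr2, (hc r hr1).trans hqf⟩
  have hWo : IsOpen W := by
    rw [Metric.isOpen_iff]
    rintro q ⟨hqU, hqf⟩
    obtain ⟨ε, hε, hc⟩ := hloc q hqU
    obtain ⟨ε', hε', hball⟩ := Metric.isOpen_iff.1 hU q hqU
    refine ⟨min ε ε', lt_min hε hε', fun r hr => ?_⟩
    have hr1 : r ∈ Metric.ball q ε := Metric.ball_subset_ball (min_le_left _ _) hr
    have hr2 : r ∈ U := hball (Metric.ball_subset_ball (min_le_right _ _) hr)
    exact ⟨hr2, (hc r hr1).symm ▸ hqf⟩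
  have hsub : U ⊆ V ∪ W := fun q hq => by
    by_cases h : f q = f x
    · exact Or.inl ⟨hq, h⟩
    · exact Or.inr ⟨hq, h⟩
  have hdisj : Disjoint V W := by
    rw [Set.disjoint_iff]
    rintro q ⟨⟨_, h1⟩, ⟨_, h2⟩⟩
    exact absurd h1 h2
  have : U ⊆ V := hUc.subset_left_of_subset_union hVo hWo hdisj hsub ⟨x, hx, hx, rfl⟩
  exact ((this hy).2).symm ▸ rfl

-- smoothness of pdV
lemma contDiffOn_pdV {U : Set Pt} (hU : IsOpen U) {f : Pt → Vec3}
    (hf : ContDiffOn ℝ (⊤ : ℕ∞) f U) (i : Fin 2) : ContDiffOn ℝ (⊤ : ℕ∞) (pdV i f) U := by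
  have h1 : ContDiffOn ℝ (⊤ : ℕ∞) (fderiv ℝ f) U :=
    hf.fderiv_of_isOpen hU (by exact_mod_cast le_top)
  have h2 : ContDiffOn ℝ (⊤ : ℕ∞) (fun p => fderiv ℝ f p (Pi.single i 1)) U :=
    h1.clm_apply contDiffOn_const
  exact h2

lemma contDiffOn_pd {U : Set Pt} (hU : IsOpen U) {f : Pt → ℝ}
    (hf : ContDiffOn ℝ (⊤ : ℕ∞) f U) (i : Fin 2) : ContDiffOn ℝ (⊤ : ℕ∞) (pd i f) U := by
  have h1 : ContDiffOn ℝ (⊤ : ℕ∞) (fderiv ℝ f) U :=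
    hf.fderiv_of_isOpen hU (by exact_mod_cast le_top)
  exact h1.clm_apply contDiffOn_const

-- coordinate of pdV
lemma pd_coord {f : Pt → Vec3} {p : Pt} (hf : DifferentiableAt ℝ f p) (k : Fin 2) (i : Fin 3) :
    pd k (fun q => f q i) p = pdV k f p i := by
  have h := ((ContinuousLinearMap.proj i : Vec3 →L[ℝ] ℝ).hasFDerivAt.comp p hf.hasFDerivAt).fderiv
  simp only [pd, pdV]
  rw [show (fun q => f q i) = ⇑(ContinuousLinearMap.proj i : Vec3 →L[ℝ] ℝ) ∘ f from rfl, h]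
  rfl

lemma differentiableAt_coord {f : Pt → Vec3} {p : Pt} (hf : DifferentiableAt ℝ f p) (i : Fin 3) :
    DifferentiableAt ℝ (fun q => f q i) p :=
  (ContinuousLinearMap.proj i : Vec3 →L[ℝ] ℝ).differentiableAt.comp p hf

-- product rule for dot products
lemma pd_dot {f g : Pt → Vec3} {p : Pt} (hf : DifferentiableAt ℝ f p)
    (hg : DifferentiableAt ℝ g p) (k : Fin 2) :
    pd k (fun q => f q ⬝ᵥ g q) p = pdV k f p ⬝ᵥ g p + f p ⬝ᵥ pdV k g p := by
  have hfun : (fun q => f q ⬝ᵥ g q) = (fun q => ∑ i : Fin 3, (fun q => f q i * g q i) q) := by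
    funext q; simp [dotProduct]
  have hdif : ∀ i : Fin 3, DifferentiableAt ℝ (fun q => f q i * g q i) p := fun i =>
    (differentiableAt_coord hf i).mul (differentiableAt_coord hg i)
  rw [hfun]
  simp only [pd]
  rw [fderiv_fun_sum (fun i _ => hdif i)]
  rw [ContinuousLinearMap.sum_apply]
  have : ∀ i : Fin 3, fderiv ℝ (fun q => f q i * g q i) p (Pi.single k 1)
      = pdV k f p i * g p i + f p i * pdV k g p i := by
    intro i
    rw [fderiv_fun_mul (differentiableAt_coord hf i) (differentiableAt_coord hg i)]
    simp only [ContinuousLinearMap.add_apply, ContinuousLinearMap.smul_apply, smul_eq_mul]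
    rw [← pd_coord hf k i, ← pd_coord hg k i]
    simp [pd]; ring
  rw [Finset.sum_congr rfl (fun i _ => this i)]
  simp [dotProduct, Finset.sum_add_distrib]

-- Clairaut
lemma pdV_comm {U : Set Pt} (hU : IsOpen U) {f : Pt → Vec3}
    (hf : ContDiffOn ℝ (⊤ : ℕ∞) f U) {p : Pt} (hp : p ∈ U) (i j : Fin 2) :
    pdV i (pdV j f) p = pdV j (pdV i f) p := by
  have hfa : ContDiffAt ℝ (⊤ : ℕ∞) f p := hf.contDiffAt (hU.mem_nhds hp)
  have hsymm := hfa.isSymmSndFDerivAt (by rw [minSmoothness_of_isRCLikeNormedField]; exact WithTop.coe_le_coe.2 le_top)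
  have hd : DifferentiableAt ℝ (fderiv ℝ f) p := by
    have := hfa.fderiv_right (m := (⊤:ℕ∞)) (by norm_cast)
    exact this.differentiableAt (by norm_cast)
  have key : ∀ a b : Fin 2, pdV a (pdV b f) p
      = fderiv ℝ (fderiv ℝ f) p (Pi.single a 1) (Pi.single b 1) := by
    intro a b
    have e1 : pdV b f = fun q => (fderiv ℝ f q) (Pi.single b 1) := rfl
    have e2 : pdV a (pdV b f) p = fderiv ℝ (fun q => (fderiv ℝ f q) (Pi.single b 1)) p (Pi.single a 1) := by
      rw [pdV, e1]
    rw [e2, fderiv_clm_apply hd (differentiableAt_const _)]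
    simp
  rw [key i j, key j i, hsymm]

section Frame
def fr (φ : Pt → Vec3) (p : Pt) : Fin 3 → Vec3 := ![pdV 0 φ p, pdV 1 φ p, unitNormal φ p]

def cp (φ : Pt → Vec3) (p : Pt) : Vec3 := crossProduct (pdV 0 φ p) (pdV 1 φ p)

lemma dotProduct_self_pos {v : Vec3} (hv : v ≠ 0) : 0 < v ⬝ᵥ v := by
  rcases lt_or_eq_of_le (Finset.sum_nonneg fun i _ => mul_self_nonneg (v i) : 0 ≤ v ⬝ᵥ v) with h | h
  · exact h
  · exact absurd (dotProduct_self_eq_zero.1 h.symm) hv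

lemma cp_ne_zero {φ : Pt → Vec3} {p : Pt}
    (hind : LinearIndependent ℝ ![pdV 0 φ p, pdV 1 φ p]) : cp φ p ≠ 0 := by
  intro h
  set E0 := pdV 0 φ p
  set E1 := pdV 1 φ p
  obtain ⟨h1ne, h2⟩ := linearIndependent_fin2.1 hind
  simp only [Matrix.cons_val_one, Matrix.head_cons, Matrix.cons_val_zero] at h1ne h2
  have lag : cp φ p ⬝ᵥ cp φ p = (E0 ⬝ᵥ E0) * (E1 ⬝ᵥ E1) - (E0 ⬝ᵥ E1) * (E1 ⬝ᵥ E0) :=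
    cross_dot_cross E0 E1 E0 E1
  rw [h] at lag
  simp only [zero_dotProduct] at lag
  set u : Vec3 := (E1 ⬝ᵥ E1) • E0 - (E0 ⬝ᵥ E1) • E1 with hu
  have huu : u ⬝ᵥ u = 0 := by
    simp only [hu, sub_dotProduct, dotProduct_sub, smul_dotProduct,
      dotProduct_smul, smul_eq_mul]
    have hcomm : E1 ⬝ᵥ E0 = E0 ⬝ᵥ E1 := dotProduct_comm _ _
    rw [hcomm] at lag ⊢
    linear_combination (-(E1 ⬝ᵥ E1)) * lag
  have hu0 : u = 0 := dotProduct_self_eq_zero.1 huu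
  have h11 : E1 ⬝ᵥ E1 ≠ 0 := fun hz => h1ne (dotProduct_self_eq_zero.1 hz)
  have : ((E1 ⬝ᵥ E1)⁻¹ * (E0 ⬝ᵥ E1)) • E1 = E0 := by
    have : (E1 ⬝ᵥ E1) • E0 = (E0 ⬝ᵥ E1) • E1 := by
      rwa [sub_eq_zero] at hu0
    rw [mul_smul, ← this, smul_smul, inv_mul_cancel₀ h11, one_smul]
  exact h2 _ this
lemma unitNormal_eq (φ : Pt → Vec3) (p : Pt) :
    unitNormal φ p = (Real.sqrt (cp φ p ⬝ᵥ cp φ p))⁻¹ • cp φ p := rfl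

lemma n_dot_n {φ : Pt → Vec3} {p : Pt}
    (hind : LinearIndependent ℝ ![pdV 0 φ p, pdV 1 φ p]) :
    unitNormal φ p ⬝ᵥ unitNormal φ p = 1 := by
  have hpos := dotProduct_self_pos (cp_ne_zero hind)
  set q : ℝ := cp φ p ⬝ᵥ cp φ p with hqdef
  have hs : Real.sqrt q ≠ 0 := ne_of_gt (Real.sqrt_pos.2 hpos)
  have hq : Real.sqrt q * Real.sqrt q = q := Real.mul_self_sqrt hpos.le
  rw [unitNormal_eq, smul_dotProduct, dotProduct_smul, smul_eq_mul, smul_eq_mul,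
    ← hqdef]
  field_simp
  rw [Real.sq_sqrt hpos.le]

lemma n_dot_E {φ : Pt → Vec3} {p : Pt} (i : Fin 2) :
    unitNormal φ p ⬝ᵥ pdV i φ p = 0 := by
  rw [unitNormal_eq, smul_dotProduct, smul_eq_mul]
  have : cp φ p ⬝ᵥ pdV i φ p = 0 := by
    rw [dotProduct_comm]
    fin_cases i
    · exact dot_self_cross _ _
    · exact dot_cross_self _ _
  rw [this, mul_zero]
lemma contDiffOn_pdV_coord {U : Set Pt} (hU : IsOpen U) {φ : Pt → Vec3}
    (hφ : ContDiffOn ℝ (⊤ : ℕ∞) φ U) (k : Fin 2) (j : Fin 3) :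
    ContDiffOn ℝ (⊤ : ℕ∞) (fun p => pdV k φ p j) U :=
  (ContinuousLinearMap.proj j : Vec3 →L[ℝ] ℝ).contDiff.comp_contDiffOn (contDiffOn_pdV hU hφ k)

lemma contDiffOn_cp_coord {U : Set Pt} (hU : IsOpen U) {φ : Pt → Vec3}
    (hφ : ContDiffOn ℝ (⊤ : ℕ∞) φ U) (i : Fin 3) :
    ContDiffOn ℝ (⊤ : ℕ∞) (fun p => cp φ p i) U := by
  have h := contDiffOn_pdV_coord hU hφ
  fin_cases i <;>
    · simp only [cp, cross_apply, Matrix.cons_val_zero, Matrix.cons_val_one, Matrix.head_cons,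
        Matrix.cons_val_two, Matrix.tail_cons]
      exact ((h _ _).mul (h _ _)).sub ((h _ _).mul (h _ _))

lemma contDiffOn_cpdot {U : Set Pt} (hU : IsOpen U) {φ : Pt → Vec3}
    (hφ : ContDiffOn ℝ (⊤ : ℕ∞) φ U) :
    ContDiffOn ℝ (⊤ : ℕ∞) (fun p => cp φ p ⬝ᵥ cp φ p) U := by
  have h := contDiffOn_cp_coord hU hφ
  have : (fun p => cp φ p ⬝ᵥ cp φ p)
      = fun p => cp φ p 0 * cp φ p 0 + cp φ p 1 * cp φ p 1 + cp φ p 2 * cp φ p 2 := by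
    funext p; simp [dotProduct, Fin.sum_univ_three]
  rw [this]
  exact (((h 0).mul (h 0)).add ((h 1).mul (h 1))).add ((h 2).mul (h 2))

lemma contDiffOn_unitNormal {U : Set Pt} (hU : IsOpen U) {φ : Pt → Vec3}
    (hφ : IsImmersionOn φ U) : ContDiffOn ℝ (⊤ : ℕ∞) (unitNormal φ) U := by
  have hQ := contDiffOn_cpdot hU hφ.1
  have hQne : ∀ p ∈ U, cp φ p ⬝ᵥ cp φ p ≠ 0 := fun p hp =>
    ne_of_gt (dotProduct_self_pos (cp_ne_zero (hφ.2 p hp)))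
  have hsq : ContDiffOn ℝ (⊤ : ℕ∞) (fun p => Real.sqrt (cp φ p ⬝ᵥ cp φ p)) U := hQ.sqrt hQne
  have hsqne : ∀ p ∈ U, Real.sqrt (cp φ p ⬝ᵥ cp φ p) ≠ 0 := fun p hp =>
    ne_of_gt (Real.sqrt_pos.2 (dotProduct_self_pos (cp_ne_zero (hφ.2 p hp))))
  have hinv : ContDiffOn ℝ (⊤ : ℕ∞) (fun p => (Real.sqrt (cp φ p ⬝ᵥ cp φ p))⁻¹) U :=
    hsq.inv hsqne
  rw [contDiffOn_pi]
  intro j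
  have : (fun p => unitNormal φ p j)
      = fun p => (Real.sqrt (cp φ p ⬝ᵥ cp φ p))⁻¹ * cp φ p j := by
    funext p; rw [unitNormal_eq]; simp
  rw [this]
  exact hinv.mul (contDiffOn_cp_coord hU hφ.1 j)

lemma contDiffOn_fr {U : Set Pt} (hU : IsOpen U) {φ : Pt → Vec3}
    (hφ : IsImmersionOn φ U) (a : Fin 3) :
    ContDiffOn ℝ (⊤ : ℕ∞) (fun p => fr φ p a) U := by
  fin_cases a
  · exact contDiffOn_pdV hU hφ.1 0
  · exact contDiffOn_pdV hU hφ.1 1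
  · exact contDiffOn_unitNormal hU hφ

lemma diffAt_of_cdOn {U : Set Pt} (hU : IsOpen U) {f : Pt → Vec3}
    (hf : ContDiffOn ℝ (⊤ : ℕ∞) f U) {p : Pt} (hp : p ∈ U) : DifferentiableAt ℝ f p :=
  (hf.contDiffAt (hU.mem_nhds hp)).differentiableAt (by norm_cast)

lemma diffAt_of_cdOn' {U : Set Pt} (hU : IsOpen U) {f : Pt → ℝ}
    (hf : ContDiffOn ℝ (⊤ : ℕ∞) f U) {p : Pt} (hp : p ∈ U) : DifferentiableAt ℝ f p :=
  (hf.contDiffAt (hU.mem_nhds hp)).differentiableAt (by norm_cast)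
lemma pd_congr_on {U : Set Pt} (hU : IsOpen U) {f g : Pt → ℝ} (h : ∀ q ∈ U, f q = g q)
    {p : Pt} (hp : p ∈ U) (k : Fin 2) : pd k f p = pd k g p := by
  have : f =ᶠ[nhds p] g := Filter.eventuallyEq_of_mem (hU.mem_nhds hp) h
  simp only [pd, this.fderiv_eq]

lemma pd_const_on {U : Set Pt} (hU : IsOpen U) {f : Pt → ℝ} {c : ℝ} (h : ∀ q ∈ U, f q = c)
    {p : Pt} (hp : p ∈ U) (k : Fin 2) : pd k f p = 0 := by
  rw [pd_congr_on hU (g := fun _ => c) h hp k]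
  simp [pd]

lemma T_formula {U : Set Pt} (hU : IsOpen U) {φ : Pt → Vec3} (hφ : IsImmersionOn φ U)
    {p : Pt} (hp : p ∈ U) (k i j : Fin 2) :
    pdV k (pdV i φ) p ⬝ᵥ pdV j φ p =
      (pd k (fun q => indMetric φ q i j) p + pd i (fun q => indMetric φ q k j) p
        - pd j (fun q => indMetric φ q k i) p) / 2 := by
  have hD : ∀ a b c : Fin 2, pd a (fun q => indMetric φ q b c) p
      = pdV a (pdV b φ) p ⬝ᵥ pdV c φ p + pdV a (pdV c φ) p ⬝ᵥ pdV b φ p := by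
    intro a b c
    have h1 : (fun q => indMetric φ q b c) = fun q => pdV b φ q ⬝ᵥ pdV c φ q := rfl
    rw [h1, pd_dot (diffAt_of_cdOn hU (contDiffOn_pdV hU hφ.1 b) hp)
      (diffAt_of_cdOn hU (contDiffOn_pdV hU hφ.1 c) hp) a]
    rw [dotProduct_comm (pdV b φ p)]
  have hs : ∀ a b : Fin 2, pdV a (pdV b φ) p = pdV b (pdV a φ) p := fun a b =>
    pdV_comm hU hφ.1 hp a b
  have e1 := hD k i j
  have e2 := hD i k j
  have e3 := hD j k i
  rw [hs i k, hs i j] at e2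
  rw [hs j k] at e3
  linarith [e1, e2, e3]

lemma S_tt_eq {U : Set Pt} (hU : IsOpen U) {φ φt : Pt → Vec3}
    (hφ : IsImmersionOn φ U) (hφt : IsImmersionOn φt U)
    (hmet : ∀ p ∈ U, indMetric φ p = indMetric φt p)
    {p : Pt} (hp : p ∈ U) (k i j : Fin 2) :
    pdV k (pdV i φ) p ⬝ᵥ pdV j φ p = pdV k (pdV i φt) p ⬝ᵥ pdV j φt p := by
  rw [T_formula hU hφ hp, T_formula hU hφt hp]
  have h : ∀ a b c : Fin 2, pd a (fun q => indMetric φ q b c) p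
      = pd a (fun q => indMetric φt q b c) p :=
    fun a b c => pd_congr_on hU (fun q hq => by rw [hmet q hq]) hp a
  rw [h, h, h]

-- tangential ⬝ normal
lemma S_tn {U : Set Pt} (hU : IsOpen U) {φ : Pt → Vec3} (hφ : IsImmersionOn φ U)
    {p : Pt} (hp : p ∈ U) (k i : Fin 2) :
    pdV k (pdV i φ) p ⬝ᵥ unitNormal φ p = sff φ p k i := by
  rw [dotProduct_comm]; rfl

-- normal ⬝ tangential
lemma S_nt {U : Set Pt} (hU : IsOpen U) {φ : Pt → Vec3} (hφ : IsImmersionOn φ U)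
    {p : Pt} (hp : p ∈ U) (k j : Fin 2) :
    pdV k (unitNormal φ) p ⬝ᵥ pdV j φ p = - sff φ p k j := by
  have h0 : pd k (fun q => unitNormal φ q ⬝ᵥ pdV j φ q) p = 0 :=
    pd_const_on hU (fun q hq => n_dot_E j) hp k
  rw [pd_dot (diffAt_of_cdOn hU (contDiffOn_unitNormal hU hφ) hp)
    (diffAt_of_cdOn hU (contDiffOn_pdV hU hφ.1 j) hp) k] at h0
  have : unitNormal φ p ⬝ᵥ pdV k (pdV j φ) p = sff φ p k j := rfl
  rw [this] at h0
  linarith [h0]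

-- normal ⬝ normal
lemma S_nn {U : Set Pt} (hU : IsOpen U) {φ : Pt → Vec3} (hφ : IsImmersionOn φ U)
    {p : Pt} (hp : p ∈ U) (k : Fin 2) :
    pdV k (unitNormal φ) p ⬝ᵥ unitNormal φ p = 0 := by
  have h0 : pd k (fun q => unitNormal φ q ⬝ᵥ unitNormal φ q) p = 0 :=
    pd_const_on hU (fun q hq => n_dot_n (hφ.2 q hq)) hp k
  rw [pd_dot (diffAt_of_cdOn hU (contDiffOn_unitNormal hU hφ) hp)
    (diffAt_of_cdOn hU (contDiffOn_unitNormal hU hφ) hp) k] at h0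
  rw [dotProduct_comm (unitNormal φ p)] at h0
  linarith [h0]

lemma S_eq {U : Set Pt} (hU : IsOpen U) {φ φt : Pt → Vec3}
    (hφ : IsImmersionOn φ U) (hφt : IsImmersionOn φt U)
    (hmet : ∀ p ∈ U, indMetric φ p = indMetric φt p)
    (hsff : ∀ p ∈ U, sff φ p = sff φt p)
    {p : Pt} (hp : p ∈ U) (k : Fin 2) (a b : Fin 3) :
    pdV k (fun q => fr φ q a) p ⬝ᵥ fr φ p b = pdV k (fun q => fr φt q a) p ⬝ᵥ fr φt p b := by
  have fr0 : ∀ ψ : Pt → Vec3, (fun q => fr ψ q 0) = pdV 0 ψ := fun ψ => by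
    funext q; simp [fr]
  have fr1 : ∀ ψ : Pt → Vec3, (fun q => fr ψ q 1) = pdV 1 ψ := fun ψ => by
    funext q; simp [fr]
  have fr2 : ∀ ψ : Pt → Vec3, (fun q => fr ψ q 2) = unitNormal ψ := fun ψ => by
    funext q; simp [fr]
  have hsffp := hsff p hp
  fin_cases a <;> fin_cases b <;>
    simp only [fr, Fin.zero_eta, Fin.mk_one, Fin.reduceFinMk, Matrix.cons_val_zero,
      Matrix.cons_val_one, Matrix.head_cons, Matrix.cons_val_two, Matrix.tail_cons]
  · exact S_tt_eq hU hφ hφt hmet hp k 0 0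
  · exact S_tt_eq hU hφ hφt hmet hp k 0 1
  · rw [S_tn hU hφ hp k 0, S_tn hU hφt hp k 0, hsffp]
  · exact S_tt_eq hU hφ hφt hmet hp k 1 0
  · exact S_tt_eq hU hφ hφt hmet hp k 1 1
  · rw [S_tn hU hφ hp k 1, S_tn hU hφt hp k 1, hsffp]
  · rw [S_nt hU hφ hp k 0, S_nt hU hφt hp k 0, hsffp]
  · rw [S_nt hU hφ hp k 1, S_nt hU hφt hp k 1, hsffp]
  · rw [S_nn hU hφ hp k, S_nn hU hφt hp k]
def frM (φ : Pt → Vec3) (p : Pt) : Matrix (Fin 3) (Fin 3) ℝ := Matrix.of fun a b => fr φ p a b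

lemma frM_mul_transpose (φ : Pt → Vec3) (p : Pt) (a b : Fin 3) :
    (frM φ p * (frM φ p)ᵀ) a b = fr φ p a ⬝ᵥ fr φ p b := by
  simp [Matrix.mul_apply, frM, dotProduct, Matrix.transpose_apply]

lemma gram_eq {U : Set Pt} (hU : IsOpen U) {φ φt : Pt → Vec3}
    (hφ : IsImmersionOn φ U) (hφt : IsImmersionOn φt U)
    (hmet : ∀ p ∈ U, indMetric φ p = indMetric φt p)
    {p : Pt} (hp : p ∈ U) :
    frM φ p * (frM φ p)ᵀ = frM φt p * (frM φt p)ᵀ := by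
  ext a b
  rw [frM_mul_transpose, frM_mul_transpose]
  have hmm : ∀ i j : Fin 2, pdV i φ p ⬝ᵥ pdV j φ p = pdV i φt p ⬝ᵥ pdV j φt p := by
    intro i j
    have := hmet p hp
    have h2 := congrFun (congrFun (congrArg (fun M => (M : Fin 2 → Fin 2 → ℝ)) this) i) j
    simpa [indMetric] using h2
  have hE : ∀ (ψ : Pt → Vec3) (i : Fin 2), pdV i ψ p ⬝ᵥ unitNormal ψ p = 0 := fun ψ i => by
    rw [dotProduct_comm]; exact n_dot_E i
  fin_cases a <;> fin_cases b <;>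
    simp only [fr, Fin.zero_eta, Fin.mk_one, Fin.reduceFinMk, Matrix.cons_val_zero,
      Matrix.cons_val_one, Matrix.head_cons, Matrix.cons_val_two, Matrix.tail_cons]
  · exact hmm 0 0
  · exact hmm 0 1
  · rw [hE φ 0, hE φt 0]
  · exact hmm 1 0
  · exact hmm 1 1
  · rw [hE φ 1, hE φt 1]
  · rw [n_dot_E 0, n_dot_E 0]
  · rw [n_dot_E 1, n_dot_E 1]
  · rw [n_dot_n (hφ.2 p hp), n_dot_n (hφt.2 p hp)]

lemma det_frM_pos {φ : Pt → Vec3} {p : Pt}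
    (hind : LinearIndependent ℝ ![pdV 0 φ p, pdV 1 φ p]) : 0 < (frM φ p).det := by
  have hq := dotProduct_self_pos (cp_ne_zero hind)
  have h1 : unitNormal φ p ⬝ᵥ cp φ p = Real.sqrt (cp φ p ⬝ᵥ cp φ p) := by
    have hs : Real.sqrt (cp φ p ⬝ᵥ cp φ p) ≠ 0 := ne_of_gt (Real.sqrt_pos.2 hq)
    rw [unitNormal_eq, smul_dotProduct, smul_eq_mul,
      inv_mul_eq_iff_eq_mul₀ hs, Real.mul_self_sqrt hq.le]
  have h2 : unitNormal φ p ⬝ᵥ cp φ p = Matrix.det ![unitNormal φ p, pdV 0 φ p, pdV 1 φ p] :=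
    triple_product_eq_det _ _ _
  have h3 : Matrix.det ![unitNormal φ p, pdV 0 φ p, pdV 1 φ p] = (frM φ p).det := by
    have : frM φ p = Matrix.of ![pdV 0 φ p, pdV 1 φ p, unitNormal φ p] := by
      ext a b
      fin_cases a <;> rfl
    rw [this]
    show Matrix.det (Matrix.of ![unitNormal φ p, pdV 0 φ p, pdV 1 φ p]) = _
    simp [Matrix.det_fin_three]
    ring
  rw [← h3, ← h2, h1]
  exact Real.sqrt_pos.2 hq
def Qm (φ φt : Pt → Vec3) (p : Pt) : Matrix (Fin 3) (Fin 3) ℝ :=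
  (frM φt p)ᵀ * ((frM φ p)ᵀ)⁻¹

section Qfacts
variable {U : Set Pt} {φ φt : Pt → Vec3} {p : Pt}

lemma detT_isUnit (hind : LinearIndependent ℝ ![pdV 0 φ p, pdV 1 φ p]) :
    IsUnit ((frM φ p)ᵀ).det := by
  rw [Matrix.det_transpose]
  exact (ne_of_gt (det_frM_pos hind)).isUnit

lemma Qm_mul_frT (hind : LinearIndependent ℝ ![pdV 0 φ p, pdV 1 φ p]) :
    Qm φ φt p * (frM φ p)ᵀ = (frM φt p)ᵀ := by
  rw [Qm, Matrix.mul_assoc, Matrix.nonsing_inv_mul _ (detT_isUnit hind), Matrix.mul_one]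

lemma frT_col (ψ : Pt → Vec3) (a : Fin 3) : (frM ψ p)ᵀ *ᵥ Pi.single a 1 = fr ψ p a := by
  funext i
  rw [Matrix.mulVec_single]
  simp [frM]

lemma Qm_mulVec_fr (hind : LinearIndependent ℝ ![pdV 0 φ p, pdV 1 φ p]) (a : Fin 3) :
    Qm φ φt p *ᵥ fr φ p a = fr φt p a := by
  rw [← frT_col φ a, Matrix.mulVec_mulVec, Qm_mul_frT hind, frT_col φt a]

lemma transfer (hU : IsOpen U) (hφ : IsImmersionOn φ U) (hφt : IsImmersionOn φt U)
    (hmet : ∀ p ∈ U, indMetric φ p = indMetric φt p) (hp : p ∈ U)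
    {v w : Vec3} (h : ∀ b, v ⬝ᵥ fr φ p b = w ⬝ᵥ fr φt p b) :
    w = Qm φ φt p *ᵥ v := by
  have hRv : frM φ p *ᵥ v = frM φt p *ᵥ w := by
    funext b
    have : (frM φ p *ᵥ v) b = fr φ p b ⬝ᵥ v := rfl
    rw [this, dotProduct_comm, h b, dotProduct_comm]
    rfl
  have key : frM φt p *ᵥ (Qm φ φt p *ᵥ v) = frM φt p *ᵥ w := by
    rw [Matrix.mulVec_mulVec, Qm, ← Matrix.mul_assoc,
      ← gram_eq hU hφ hφt hmet hp, Matrix.mul_assoc,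
      Matrix.mul_nonsing_inv _ (detT_isUnit (hφ.2 p hp)), Matrix.mul_one, hRv]
  have hdet : IsUnit (frM φt p).det := (ne_of_gt (det_frM_pos (hφt.2 p hp))).isUnit
  have h2 := congrArg (fun u => (frM φt p)⁻¹ *ᵥ u) key
  simp only [Matrix.mulVec_mulVec, ← Matrix.mul_assoc, Matrix.nonsing_inv_mul _ hdet,
    Matrix.one_mul, Matrix.one_mulVec] at h2
  exact h2.symm

lemma Qm_orthogonal (hU : IsOpen U) (hφ : IsImmersionOn φ U) (hφt : IsImmersionOn φt U)
    (hmet : ∀ p ∈ U, indMetric φ p = indMetric φt p) (hp : p ∈ U) :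
    (Qm φ φt p)ᵀ * Qm φ φt p = 1 := by
  have hdetT := detT_isUnit (hφ.2 p hp)
  have hdet : IsUnit (frM φ p).det := (ne_of_gt (det_frM_pos (hφ.2 p hp))).isUnit
  rw [Qm, Matrix.transpose_mul, Matrix.transpose_nonsing_inv, Matrix.transpose_transpose]
  calc ((frM φ p)⁻¹ * (frM φt p)ᵀᵀ) * ((frM φt p)ᵀ * ((frM φ p)ᵀ)⁻¹)
      = (frM φ p)⁻¹ * (frM φt p * (frM φt p)ᵀ) * ((frM φ p)ᵀ)⁻¹ := by
        rw [Matrix.transpose_transpose]; noncomm_ring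
    _ = (frM φ p)⁻¹ * (frM φ p * (frM φ p)ᵀ) * ((frM φ p)ᵀ)⁻¹ := by
        rw [gram_eq hU hφ hφt hmet hp]
    _ = ((frM φ p)⁻¹ * frM φ p) * ((frM φ p)ᵀ * ((frM φ p)ᵀ)⁻¹) := by noncomm_ring
    _ = 1 := by
        rw [Matrix.nonsing_inv_mul _ hdet, Matrix.mul_nonsing_inv _ hdetT, Matrix.one_mul]

lemma Qm_det_one (hU : IsOpen U) (hφ : IsImmersionOn φ U) (hφt : IsImmersionOn φt U)
    (hmet : ∀ p ∈ U, indMetric φ p = indMetric φt p) (hp : p ∈ U) :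
    (Qm φ φt p).det = 1 := by
  have h1 : (Qm φ φt p).det = (frM φt p).det * ((frM φ p).det)⁻¹ := by
    rw [Qm, Matrix.det_mul, Matrix.det_transpose, Matrix.det_nonsing_inv,
      Matrix.det_transpose, Ring.inverse_eq_inv]
  have hpos : 0 < (Qm φ φt p).det := by
    rw [h1]
    exact mul_pos (det_frM_pos (hφt.2 p hp)) (inv_pos.2 (det_frM_pos (hφ.2 p hp)))
  have h2 : (Qm φ φt p).det * (Qm φ φt p).det = 1 := by
    have := congrArg Matrix.det (Qm_orthogonal hU hφ hφt hmet hp)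
    rwa [Matrix.det_mul, Matrix.det_transpose, Matrix.det_one] at this
  nlinarith [hpos, h2]

end Qfacts
section Analysis
variable {U : Set Pt} {φ φt : Pt → Vec3}

lemma contDiffOn_fr_coord (hU : IsOpen U) (hφ : IsImmersionOn φ U) (a i : Fin 3) :
    ContDiffOn ℝ (⊤ : ℕ∞) (fun p => fr φ p a i) U :=
  (ContinuousLinearMap.proj i : Vec3 →L[ℝ] ℝ).contDiff.comp_contDiffOn (contDiffOn_fr hU hφ a)

lemma contDiffOn_det_frT (hU : IsOpen U) (hφ : IsImmersionOn φ U) :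
    ContDiffOn ℝ (⊤ : ℕ∞) (fun p => ((frM φ p)ᵀ).det) U := by
  have h : ∀ a i : Fin 3, ContDiffOn ℝ (⊤ : ℕ∞) (fun p => (frM φ p)ᵀ a i) U := fun a i =>
    contDiffOn_fr_coord hU hφ i a
  simp only [Matrix.det_fin_three]
  exact (((((((h 0 0).mul (h 1 1)).mul (h 2 2)).sub (((h 0 0).mul (h 1 2)).mul (h 2 1))).sub
    (((h 0 1).mul (h 1 0)).mul (h 2 2))).add (((h 0 1).mul (h 1 2)).mul (h 2 0))).add
    (((h 0 2).mul (h 1 0)).mul (h 2 1))).sub (((h 0 2).mul (h 1 1)).mul (h 2 0))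

lemma contDiffOn_adj_frT (hU : IsOpen U) (hφ : IsImmersionOn φ U) (c j : Fin 3) :
    ContDiffOn ℝ (⊤ : ℕ∞) (fun p => ((frM φ p)ᵀ).adjugate c j) U := by
  have h : ∀ a i : Fin 3, ContDiffOn ℝ (⊤ : ℕ∞) (fun p => (frM φ p)ᵀ a i) U := fun a i =>
    contDiffOn_fr_coord hU hφ i a
  simp only [Matrix.adjugate_fin_three]
  fin_cases c <;> fin_cases j <;>
    simp only [Matrix.cons_val_zero, Matrix.cons_val_one, Matrix.head_cons,
      Matrix.cons_val_two, Matrix.tail_cons, Matrix.of_apply, Matrix.cons_val', Matrix.head_fin_const,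
      Matrix.empty_val', Matrix.cons_val_fin_one, Fin.zero_eta, Fin.mk_one, Fin.reduceFinMk] <;>
    first
      | exact ((h _ _).mul (h _ _)).sub ((h _ _).mul (h _ _))
      | exact (((h _ _).mul (h _ _)).neg).add ((h _ _).mul (h _ _))

lemma contDiffOn_frTinv (hU : IsOpen U) (hφ : IsImmersionOn φ U) (c j : Fin 3) :
    ContDiffOn ℝ (⊤ : ℕ∞) (fun p => ((frM φ p)ᵀ)⁻¹ c j) U := by
  have hdetne : ∀ p ∈ U, ((frM φ p)ᵀ).det ≠ 0 := fun p hp => by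
    rw [Matrix.det_transpose]
    exact ne_of_gt (det_frM_pos (hφ.2 p hp))
  simp only [Matrix.inv_def, Ring.inverse_eq_inv, Matrix.smul_apply, smul_eq_mul]
  exact ((contDiffOn_det_frT hU hφ).inv hdetne).mul (contDiffOn_adj_frT hU hφ c j)

lemma contDiffOn_Qm (hU : IsOpen U) (hφ : IsImmersionOn φ U) (hφt : IsImmersionOn φt U)
    (i j : Fin 3) : ContDiffOn ℝ (⊤ : ℕ∞) (fun p => Qm φ φt p i j) U := by
  simp only [Qm, Matrix.mul_apply]
  exact ContDiffOn.sum fun c _ =>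
    (contDiffOn_fr_coord hU hφt c i).mul (contDiffOn_frTinv hU hφ c j)

lemma pd_sum_mul {f g : Fin 3 → Pt → ℝ} {p : Pt} (hf : ∀ c, DifferentiableAt ℝ (f c) p)
    (hg : ∀ c, DifferentiableAt ℝ (g c) p) (k : Fin 2) :
    pd k (fun q => ∑ c : Fin 3, f c q * g c q) p
      = ∑ c : Fin 3, (pd k (f c) p * g c p + f c p * pd k (g c) p) := by
  simp only [pd]
  rw [fderiv_fun_sum (A := fun c q => f c q * g c q) (fun c _ => ((hf c).mul (hg c))), ContinuousLinearMap.sum_apply]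
  refine Finset.sum_congr rfl fun c _ => ?_
  rw [fderiv_fun_mul (hf c) (hg c)]
  simp only [ContinuousLinearMap.add_apply, ContinuousLinearMap.smul_apply, smul_eq_mul]
  ring

end Analysis
lemma pd_sub {f g : Pt → ℝ} {p : Pt} (hf : DifferentiableAt ℝ f p)
    (hg : DifferentiableAt ℝ g p) (k : Fin 2) :
    pd k (fun q => f q - g q) p = pd k f p - pd k g p := by
  simp only [pd]
  rw [fderiv_fun_sub hf hg]
  simp

lemma fr_zero (ψ : Pt → Vec3) (q : Pt) : fr ψ q 0 = pdV 0 ψ q := rfl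
lemma fr_one (ψ : Pt → Vec3) (q : Pt) : fr ψ q 1 = pdV 1 ψ q := rfl

lemma pd_Qm_zero {U : Set Pt} (hU : IsOpen U) {φ φt : Pt → Vec3}
    (hφ : IsImmersionOn φ U) (hφt : IsImmersionOn φt U)
    (hmet : ∀ p ∈ U, indMetric φ p = indMetric φt p)
    (hsff : ∀ p ∈ U, sff φ p = sff φt p)
    {p : Pt} (hp : p ∈ U) (k : Fin 2) (i j : Fin 3) :
    pd k (fun q => Qm φ φt q i j) p = 0 := by
  have key1 : ∀ a : Fin 3, pdV k (fun q => fr φt q a) p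
      = Qm φ φt p *ᵥ pdV k (fun q => fr φ q a) p := fun a =>
    transfer hU hφ hφt hmet hp (fun b => S_eq hU hφ hφt hmet hsff hp k a b)
  set M : Matrix (Fin 3) (Fin 3) ℝ := Matrix.of fun i c => pd k (fun q => Qm φ φt q i c) p with hM
  have hdifffr : ∀ (ψ : Pt → Vec3), IsImmersionOn ψ U →
      ∀ a, DifferentiableAt ℝ (fun q => fr ψ q a) p :=
    fun ψ hψ a => diffAt_of_cdOn hU (contDiffOn_fr hU hψ a) hp
  have claim : M * (frM φ p)ᵀ = 0 := by
    ext i' a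
    have hFeq : ∀ q ∈ U, (∑ c : Fin 3, Qm φ φt q i' c * fr φ q a c) = fr φt q a i' := by
      intro q hq
      have h2 := congrFun (congrFun (Qm_mul_frT (φt := φt) (hφ.2 q hq)) i') a
      rw [Matrix.mul_apply] at h2
      simpa [Matrix.transpose_apply, frM] using h2
    have hQd : ∀ c, DifferentiableAt ℝ (fun q => Qm φ φt q i' c) p :=
      fun c => diffAt_of_cdOn' hU (contDiffOn_Qm hU hφ hφt i' c) hp
    have hfd : ∀ c, DifferentiableAt ℝ (fun q => fr φ q a c) p :=
      fun c => differentiableAt_coord (hdifffr φ hφ a) c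
    have lhs := pd_sum_mul hQd hfd k
    rw [pd_congr_on hU hFeq hp k] at lhs
    have e1 : pd k (fun q => fr φt q a i') p = pdV k (fun q => fr φt q a) p i' :=
      pd_coord (hdifffr φt hφt a) k i'
    have e2 : ∀ c, pd k (fun q => fr φ q a c) p = pdV k (fun q => fr φ q a) p c :=
      fun c => pd_coord (hdifffr φ hφ a) k c
    rw [e1, key1 a] at lhs
    have hexp : (Qm φ φt p *ᵥ pdV k (fun q => fr φ q a) p) i'
        = ∑ c : Fin 3, Qm φ φt p i' c * pdV k (fun q => fr φ q a) p c := by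
      simp [Matrix.mulVec, dotProduct]
    rw [hexp] at lhs
    simp only [e2, Finset.sum_add_distrib] at lhs
    have hzero : ∑ c : Fin 3, pd k (fun q => Qm φ φt q i' c) p * fr φ p a c = 0 := by
      linarith [lhs]
    simp only [Matrix.mul_apply, Matrix.zero_apply, Matrix.transpose_apply]
    rw [← hzero]
    refine Finset.sum_congr rfl fun c _ => ?_
    simp [hM, frM]
  have hBdet := detT_isUnit (hφ.2 p hp)
  have hM0 : M = 0 := by
    have h2 := congrArg (fun N => N * ((frM φ p)ᵀ)⁻¹) claim
    simpa [Matrix.mul_assoc, Matrix.mul_nonsing_inv _ hBdet] using h2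
  have := congrFun (congrFun hM0 i) j
  simpa [hM] using this

end Frame
/-- **Bonnet's theorem (rigidity).** Two smooth immersions of a connected open set
`U ⊆ ℝ²` into `ℝ³` with the same first and second fundamental forms differ by a rigid
motion: a rotation `Q ∈ SO(3)` followed by a translation `b`. -/
theorem bonnet_rigidity
    (U : Set Pt) (hU : IsOpen U) (hUconn : IsConnected U)
    (φ φt : Pt → Vec3)
    (hφ : IsImmersionOn φ U) (hφt : IsImmersionOn φt U)
    (hmet : ∀ p ∈ U, indMetric φ p = indMetric φt p)
    (hsff : ∀ p ∈ U, sff φ p = sff φt p) :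
    ∃ (Q : Matrix (Fin 3) (Fin 3) ℝ) (b : Vec3),
      Qᵀ * Q = 1 ∧ Q.det = 1 ∧
      ∀ p ∈ U, φt p = Q.mulVec (φ p) + b := by
  obtain ⟨p₀, hp₀⟩ := hUconn.nonempty
  refine ⟨Qm φ φt p₀, φt p₀ - Qm φ φt p₀ *ᵥ φ p₀,
    Qm_orthogonal hU hφ hφt hmet hp₀, Qm_det_one hU hφ hφt hmet hp₀, ?_⟩
  have hQconst : ∀ p ∈ U, Qm φ φt p = Qm φ φt p₀ := by
    intro p hp
    ext i j
    exact const_of_pd_zero hU hUconn.isPreconnected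
      (fun q hq => diffAt_of_cdOn' hU (contDiffOn_Qm hU hφ hφt i j) hq)
      (fun q hq k => pd_Qm_zero hU hφ hφt hmet hsff hq k i j) hp hp₀
  intro p hp
  set Q := Qm φ φt p₀ with hQ
  have hfun : ∀ (i : Fin 3) (q : Pt), (Q *ᵥ φ q) i = ∑ c : Fin 3, Q i c * φ q c := by
    intro i q; simp [Matrix.mulVec, dotProduct]
  have hfr : ∀ q ∈ U, ∀ k : Fin 2, pdV k φt q = Q *ᵥ pdV k φ q := by
    intro q hq k
    have base : ∀ a : Fin 3, fr φt q a = Qm φ φt q *ᵥ fr φ q a :=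
      fun a => (Qm_mulVec_fr (hφ.2 q hq) a).symm
    rw [← hQconst q hq]
    fin_cases k
    · show pdV 0 φt q = Qm φ φt q *ᵥ pdV 0 φ q
      rw [← fr_zero φt q, ← fr_zero φ q]; exact base 0
    · show pdV 1 φt q = Qm φ φt q *ᵥ pdV 1 φ q
      rw [← fr_one φt q, ← fr_one φ q]; exact base 1
  have hconst : ∀ i : Fin 3, φt p i - (Q *ᵥ φ p) i = φt p₀ i - (Q *ᵥ φ p₀) i := by
    intro i
    have hdiff : ∀ q ∈ U, DifferentiableAt ℝ (fun q' => φt q' i - (Q *ᵥ φ q') i) q := by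
      intro q hq
      have h1 : DifferentiableAt ℝ (fun q' => φt q' i) q :=
        differentiableAt_coord (diffAt_of_cdOn hU hφt.1 hq) i
      have h2 : DifferentiableAt ℝ (fun q' => (Q *ᵥ φ q') i) q := by
        simp only [hfun]
        exact DifferentiableAt.fun_sum fun c _ =>
          (differentiableAt_const _).mul (differentiableAt_coord (diffAt_of_cdOn hU hφ.1 hq) c)
      exact h1.sub h2
    have hzero : ∀ q ∈ U, ∀ k : Fin 2, pd k (fun q' => φt q' i - (Q *ᵥ φ q') i) q = 0 := by
      intro q hq k
      have h1 : DifferentiableAt ℝ (fun q' => φt q' i) q :=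
        differentiableAt_coord (diffAt_of_cdOn hU hφt.1 hq) i
      have h2 : DifferentiableAt ℝ (fun q' => (Q *ᵥ φ q') i) q := by
        simp only [hfun]
        exact DifferentiableAt.fun_sum fun c _ =>
          (differentiableAt_const _).mul (differentiableAt_coord (diffAt_of_cdOn hU hφ.1 hq) c)
      rw [pd_sub h1 h2 k]
      have e1 : pd k (fun q' => φt q' i) q = pdV k φt q i :=
        pd_coord (diffAt_of_cdOn hU hφt.1 hq) k i
      have e2 : pd k (fun q' => (Q *ᵥ φ q') i) q = (Q *ᵥ pdV k φ q) i := by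
        have hr : (fun q' => (Q *ᵥ φ q') i) = fun q' => ∑ c : Fin 3, (fun _ => Q i c) q' * φ q' c := by
          funext q'; rw [hfun]
        rw [hr, pd_sum_mul (fun c => differentiableAt_const _)
          (fun c => differentiableAt_coord (diffAt_of_cdOn hU hφ.1 hq) c) k]
        have : ∀ c : Fin 3, pd k (fun _ => Q i c) q = 0 := by
          intro c; simp [pd]
        simp only [this, zero_mul, zero_add]
        have hmv : (Q *ᵥ pdV k φ q) i = ∑ c : Fin 3, Q i c * pdV k φ q c := by
          simp [Matrix.mulVec, dotProduct]
        rw [hmv]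
        refine Finset.sum_congr rfl fun c _ => ?_
        rw [pd_coord (diffAt_of_cdOn hU hφ.1 hq) k c]
      rw [e1, e2, hfr q hq k]
      ring
    exact const_of_pd_zero hU hUconn.isPreconnected hdiff hzero hp hp₀
  funext i
  have := hconst i
  simp only [Pi.add_apply, Pi.sub_apply]
  linarith [this]
end
end

section
/- Let U ⊆ ℝ² be open and φ : U → ℝ³ a smooth immersion with induced metric g and second fundamental form h. Then the Gauss equation holds: det(g⁻¹h) = K at every point of U, where K is the Gauss curvature of the induced metric g computed intrinsically from g. -/
noncomputable section
open Matrix Real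

set_option linter.unusedSectionVars false
set_option maxHeartbeats 1600000

section helpers
variable {i j : Fin 2} {f f₁ f₂ : Pt → ℝ} {F : Pt → Vec3} {p : Pt}

lemma pd_congr (h : f =ᶠ[nhds p] f₁) : pd i f p = pd i f₁ p := by
  unfold pd; rw [h.fderiv_eq]

lemma pdV_congr (h : F =ᶠ[nhds p] (F₁ : Pt → Vec3)) : pdV i F p = pdV i F₁ p := by
  unfold pdV; rw [h.fderiv_eq]

lemma pd_add (h1 : DifferentiableAt ℝ f₁ p) (h2 : DifferentiableAt ℝ f₂ p) :
    pd i (fun q => f₁ q + f₂ q) p = pd i f₁ p + pd i f₂ p := by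
  simp [pd, fderiv_fun_add h1 h2]

lemma pd_sub_s2 (h1 : DifferentiableAt ℝ f₁ p) (h2 : DifferentiableAt ℝ f₂ p) :
    pd i (fun q => f₁ q - f₂ q) p = pd i f₁ p - pd i f₂ p := by
  simp [pd, fderiv_fun_sub h1 h2]

lemma pd_mul (h1 : DifferentiableAt ℝ f₁ p) (h2 : DifferentiableAt ℝ f₂ p) :
    pd i (fun q => f₁ q * f₂ q) p = pd i f₁ p * f₂ p + f₁ p * pd i f₂ p := by
  simp [pd, fderiv_fun_mul h1 h2]; ring

lemma pd_sum {n : ℕ} {F : Fin n → Pt → ℝ} (h : ∀ k, DifferentiableAt ℝ (F k) p) :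
    pd i (fun q => ∑ k, F k q) p = ∑ k, pd i (F k) p := by
  simp [pd, fderiv_fun_sum (fun k _ => h k)]

lemma pdV_apply (hf : DifferentiableAt ℝ F p) (a : Fin 3) :
    pdV i F p a = pd i (fun q => F q a) p := by
  have : fderiv ℝ (fun q => F q a) p =
      (ContinuousLinearMap.proj (R := ℝ) (φ := fun _ : Fin 3 => ℝ) a).comp (fderiv ℝ F p) :=
    ((ContinuousLinearMap.proj (R := ℝ) (φ := fun _ : Fin 3 => ℝ) a).hasFDerivAt.comp p
      hf.hasFDerivAt).fderiv
  simp [pd, pdV, this]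

lemma contDiffAt_pd (h : ContDiffAt ℝ (⊤:ℕ∞) f p) : ContDiffAt ℝ (⊤:ℕ∞) (pd i f) p := by
  show ContDiffAt ℝ (⊤:ℕ∞) (fun q => fderiv ℝ f q (Pi.single i 1)) p
  exact (h.fderiv_right (m := (⊤:ℕ∞)) (by exact_mod_cast le_top)).clm_apply contDiffAt_const

lemma contDiffAt_pdV (h : ContDiffAt ℝ (⊤:ℕ∞) F p) : ContDiffAt ℝ (⊤:ℕ∞) (pdV i F) p := by
  show ContDiffAt ℝ (⊤:ℕ∞) (fun q => fderiv ℝ F q (Pi.single i 1)) p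
  exact (h.fderiv_right (m := (⊤:ℕ∞)) (by exact_mod_cast le_top)).clm_apply contDiffAt_const

lemma contDiffAt_apply_fin3 (h : ContDiffAt ℝ (⊤:ℕ∞) F p) (a : Fin 3) :
    ContDiffAt ℝ (⊤:ℕ∞) (fun q => F q a) p := by
  exact (contDiffAt_pi.mp h) a

lemma pdV_comm_s2 (h : ContDiffAt ℝ (⊤:ℕ∞) F p) : pdV i (pdV j F) p = pdV j (pdV i F) p := by
  have hd : DifferentiableAt ℝ (fderiv ℝ F) p :=
    (h.fderiv_right (m := (⊤:ℕ∞)) (by exact_mod_cast le_top)).differentiableAt (by norm_cast)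
  have key : ∀ (k : Fin 2) (v : Pt), pdV k (fun q => fderiv ℝ F q v) p = fun a =>
      fderiv ℝ (fderiv ℝ F) p (Pi.single k 1) v a := by
    intro k v
    have : fderiv ℝ (fun q => fderiv ℝ F q v) p =
        (ContinuousLinearMap.apply ℝ Vec3 v).comp (fderiv ℝ (fderiv ℝ F) p) :=
      ((ContinuousLinearMap.apply ℝ Vec3 v).hasFDerivAt.comp p hd.hasFDerivAt).fderiv
    simp [pdV, this]
  have hsymm := (h.isSymmSndFDerivAt (by rw [minSmoothness_of_isRCLikeNormedField]; exact WithTop.coe_le_coe.mpr le_top)) (Pi.single i 1) (Pi.single j 1)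
  show pdV i (fun q => fderiv ℝ F q (Pi.single j 1)) p
      = pdV j (fun q => fderiv ℝ F q (Pi.single i 1)) p
  rw [key i _, key j _]
  funext a; rw [hsymm]
end helpers

section geo
variable {U : Set Pt} {φ : Pt → Vec3}

variable (hU : IsOpen U) (hφ : IsImmersionOn φ U) {p : Pt} (hp : p ∈ U)
include hU hφ hp

lemma smooth_phi : ContDiffAt ℝ (⊤:ℕ∞) φ p := hφ.1.contDiffAt (hU.mem_nhds hp)

lemma smooth_e (i : Fin 2) : ContDiffAt ℝ (⊤:ℕ∞) (pdV i φ) p :=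
  contDiffAt_pdV (smooth_phi hU hφ hp)

lemma smooth_w (i j : Fin 2) : ContDiffAt ℝ (⊤:ℕ∞) (pdV i (pdV j φ)) p :=
  contDiffAt_pdV (contDiffAt_pdV (smooth_phi hU hφ hp))

lemma smooth_g (i j : Fin 2) : ContDiffAt ℝ (⊤:ℕ∞) (fun q => indMetric φ q i j) p := by
  show ContDiffAt ℝ (⊤:ℕ∞) (fun q => ∑ a, pdV i φ q a * pdV j φ q a) p
  exact ContDiffAt.sum fun a _ =>
    (contDiffAt_apply_fin3 (smooth_e hU hφ hp i) a).mul (contDiffAt_apply_fin3 (smooth_e hU hφ hp j) a)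

lemma lagrange : (indMetric φ p).det =
    (crossProduct (pdV 0 φ p) (pdV 1 φ p)) ⬝ᵥ (crossProduct (pdV 0 φ p) (pdV 1 φ p)) := by
  simp [indMetric, Matrix.det_fin_two, crossProduct, dotProduct, Fin.sum_univ_three]
  ring

lemma cc_pos : 0 < (crossProduct (pdV 0 φ p) (pdV 1 φ p)) ⬝ᵥ
    (crossProduct (pdV 0 φ p) (pdV 1 φ p)) := by
  set e0 := pdV 0 φ p
  set e1 := pdV 1 φ p
  set c := crossProduct e0 e1 with hc
  have hli := hφ.2 p hp
  have h1 : e1 ≠ 0 := by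
    intro h
    exact one_ne_zero (LinearIndependent.pair_iff.mp hli 0 1 (by simpa using h)).2
  have he1 : e1 ⬝ᵥ e1 ≠ 0 := fun h => h1 (dotProduct_self_eq_zero.mp h)
  rcases lt_or_eq_of_le (Finset.sum_nonneg fun a _ => mul_self_nonneg (c a) :
      (0:ℝ) ≤ c ⬝ᵥ c) with h | h
  · exact h
  exfalso
  set v : Vec3 := fun a => (e1 ⬝ᵥ e1) * e0 a - (e0 ⬝ᵥ e1) * e1 a with hv
  have hvv : v ⬝ᵥ v = (e1 ⬝ᵥ e1) * (c ⬝ᵥ c) := by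
    simp [hv, hc, crossProduct, dotProduct, Fin.sum_univ_three]
    ring
  have h' : c ⬝ᵥ c = 0 := h.symm
  have hv0 : v = 0 := dotProduct_self_eq_zero.mp (by rw [hvv, h', mul_zero])
  have : (e1 ⬝ᵥ e1) • e0 + (-(e0 ⬝ᵥ e1)) • e1 = 0 := by
    funext a
    have := congrFun hv0 a
    simp [hv] at this ⊢
    linarith
  exact he1 (LinearIndependent.pair_iff.mp hli _ _ this).1

lemma detg_pos : 0 < (indMetric φ p).det := by
  rw [lagrange hU hφ hp]; exact cc_pos hU hφ hp
end geo

section geo2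
variable {U : Set Pt} {φ : Pt → Vec3}

lemma g_symm (q : Pt) (i j : Fin 2) : indMetric φ q i j = indMetric φ q j i := by
  simp only [indMetric, Matrix.of_apply, dotProduct_comm]

lemma c_dot_e (q : Pt) (b : Fin 2) :
    crossProduct (pdV 0 φ q) (pdV 1 φ q) ⬝ᵥ pdV b φ q = 0 := by
  fin_cases b
  · rw [dotProduct_comm]; exact dot_self_cross _ _
  · rw [dotProduct_comm]; exact dot_cross_self _ _

lemma N_dot_e (q : Pt) (b : Fin 2) : unitNormal φ q ⬝ᵥ pdV b φ q = 0 := by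
  show ((_ : ℝ) • crossProduct (pdV 0 φ q) (pdV 1 φ q)) ⬝ᵥ pdV b φ q = 0
  rw [smul_dotProduct, c_dot_e, smul_zero]

lemma triple (u v x : Vec3) : (Matrix.of ![u, v, x]).det = x ⬝ᵥ crossProduct u v := by
  simp [Matrix.det_fin_three, crossProduct, dotProduct, Fin.sum_univ_three]
  ring

variable (hU : IsOpen U) (hφ : IsImmersionOn φ U) {p : Pt} (hp : p ∈ U)
include hU hφ hp

lemma N_dot_N : unitNormal φ p ⬝ᵥ unitNormal φ p = 1 := by
  have hcc := cc_pos hU hφ hp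
  set c := crossProduct (pdV 0 φ p) (pdV 1 φ p)
  have key : ∀ X : ℝ, 0 < X → (Real.sqrt X)⁻¹ * ((Real.sqrt X)⁻¹ * X) = (1:ℝ) := by
    intro X hX
    have h1 : Real.sqrt X ≠ 0 := ne_of_gt (Real.sqrt_pos.mpr hX)
    field_simp
    exact (Real.sq_sqrt hX.le).symm
  show ((Real.sqrt (c ⬝ᵥ c))⁻¹ • c) ⬝ᵥ ((Real.sqrt (c ⬝ᵥ c))⁻¹ • c) = 1
  rw [smul_dotProduct, dotProduct_smul, smul_eq_mul, smul_eq_mul]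
  exact key _ hcc

omit hU hφ hp in
lemma N_dot_w (q : Pt) (i j : Fin 2) : unitNormal φ q ⬝ᵥ pdV i (pdV j φ) q = sff φ q i j := rfl

lemma smooth_c (a : Fin 3) :
    ContDiffAt ℝ (⊤:ℕ∞) (fun q => crossProduct (pdV 0 φ q) (pdV 1 φ q) a) p := by
  have h0 := smooth_e hU hφ hp 0
  have h1 := smooth_e hU hφ hp 1
  fin_cases a <;>
  · simp only [crossProduct, LinearMap.mk₂_apply, Matrix.cons_val_zero, Matrix.cons_val_one,
      Matrix.head_cons, Matrix.cons_val_two, Matrix.tail_cons]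
    exact ((contDiffAt_apply_fin3 h0 _).mul (contDiffAt_apply_fin3 h1 _)).sub
      ((contDiffAt_apply_fin3 h0 _).mul (contDiffAt_apply_fin3 h1 _))

lemma smooth_cc :
    ContDiffAt ℝ (⊤:ℕ∞) (fun q => crossProduct (pdV 0 φ q) (pdV 1 φ q) ⬝ᵥ
      crossProduct (pdV 0 φ q) (pdV 1 φ q)) p := by
  show ContDiffAt ℝ (⊤:ℕ∞) (fun q => ∑ a, crossProduct (pdV 0 φ q) (pdV 1 φ q) a *
      crossProduct (pdV 0 φ q) (pdV 1 φ q) a) p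
  exact ContDiffAt.sum fun a _ => (smooth_c hU hφ hp a).mul (smooth_c hU hφ hp a)

lemma smooth_N : ContDiffAt ℝ (⊤:ℕ∞) (unitNormal φ) p := by
  have hcc := cc_pos hU hφ hp
  apply contDiffAt_pi.2
  intro a
  show ContDiffAt ℝ (⊤:ℕ∞) (fun q => (Real.sqrt (crossProduct (pdV 0 φ q) (pdV 1 φ q) ⬝ᵥ
      crossProduct (pdV 0 φ q) (pdV 1 φ q)))⁻¹ * crossProduct (pdV 0 φ q) (pdV 1 φ q) a) p
  have hsq : ContDiffAt ℝ (⊤:ℕ∞) (fun q => Real.sqrt (crossProduct (pdV 0 φ q) (pdV 1 φ q) ⬝ᵥ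
      crossProduct (pdV 0 φ q) (pdV 1 φ q))) p :=
    (Real.contDiffAt_sqrt (ne_of_gt hcc)).comp p (smooth_cc hU hφ hp)
  exact (hsq.inv (ne_of_gt (Real.sqrt_pos.mpr hcc))).mul (smooth_c hU hφ hp a)

lemma smooth_h (i j : Fin 2) : ContDiffAt ℝ (⊤:ℕ∞) (fun q => sff φ q i j) p := by
  show ContDiffAt ℝ (⊤:ℕ∞) (fun q => ∑ a, unitNormal φ q a * pdV i (pdV j φ) q a) p
  exact ContDiffAt.sum fun a _ => (contDiffAt_apply_fin3 (smooth_N hU hφ hp) a).mul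
    (contDiffAt_apply_fin3 (smooth_w hU hφ hp i j) a)

omit hU hφ hp in
lemma smooth_detg' : ∀ q, (indMetric φ q).det =
    indMetric φ q 0 0 * indMetric φ q 1 1 - indMetric φ q 0 1 * indMetric φ q 1 0 :=
  fun q => Matrix.det_fin_two _

lemma smooth_detg : ContDiffAt ℝ (⊤:ℕ∞) (fun q => (indMetric φ q).det) p := by
  have : (fun q => (indMetric φ q).det) = fun q =>
      indMetric φ q 0 0 * indMetric φ q 1 1 - indMetric φ q 0 1 * indMetric φ q 1 0 := by
    funext q; exact Matrix.det_fin_two _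
  rw [this]
  exact ((smooth_g hU hφ hp 0 0).mul (smooth_g hU hφ hp 1 1)).sub
    ((smooth_g hU hφ hp 0 1).mul (smooth_g hU hφ hp 1 0))

omit hU hφ hp in
lemma ginv_eq (q : Pt) : (indMetric φ q)⁻¹ =
    ((indMetric φ q).det)⁻¹ • !![indMetric φ q 1 1, -(indMetric φ q 0 1);
      -(indMetric φ q 1 0), indMetric φ q 0 0] := by
  rw [Matrix.inv_def, Matrix.adjugate_fin_two, Ring.inverse_eq_inv']

lemma smooth_ginv (k l : Fin 2) :
    ContDiffAt ℝ (⊤:ℕ∞) (fun q => (indMetric φ q)⁻¹ k l) p := by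
  have hd0 : (indMetric φ p).det ≠ 0 := ne_of_gt (detg_pos hU hφ hp)
  have hinv : ContDiffAt ℝ (⊤:ℕ∞) (fun q => ((indMetric φ q).det)⁻¹) p :=
    (smooth_detg hU hφ hp).inv hd0
  have : (fun q => (indMetric φ q)⁻¹ k l) = fun q =>
      ((indMetric φ q).det)⁻¹ * (!![indMetric φ q 1 1, -(indMetric φ q 0 1);
      -(indMetric φ q 1 0), indMetric φ q 0 0] k l) := by
    funext q; rw [ginv_eq]; simp
  rw [this]
  fin_cases k <;> fin_cases l <;>
    simp only [Matrix.cons_val_zero, Matrix.cons_val_one, Matrix.head_cons, Matrix.cons_val',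
      Matrix.empty_val', Matrix.cons_val_fin_one, Matrix.head_fin_const] <;>
  first
  | exact hinv.mul (smooth_g hU hφ hp 1 1)
  | exact hinv.mul ((smooth_g hU hφ hp 0 1).neg)
  | exact hinv.mul ((smooth_g hU hφ hp 1 0).neg)
  | exact hinv.mul (smooth_g hU hφ hp 0 0)

lemma smooth_christoffel (k i j : Fin 2) :
    ContDiffAt ℝ (⊤:ℕ∞) (christoffel (indMetric φ) k i j) p := by
  show ContDiffAt ℝ (⊤:ℕ∞) (fun q => (1/2 : ℝ) * ∑ l, (indMetric φ q)⁻¹ k l *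
    (pd i (fun r => indMetric φ r j l) q + pd j (fun r => indMetric φ r i l) q
      - pd l (fun r => indMetric φ r i j) q)) p
  apply ContDiffAt.mul contDiffAt_const
  apply ContDiffAt.sum
  intro l _
  exact (smooth_ginv hU hφ hp k l).mul
    (((contDiffAt_pd (smooth_g hU hφ hp j l)).add (contDiffAt_pd (smooth_g hU hφ hp i l))).sub
      (contDiffAt_pd (smooth_g hU hφ hp i j)))

lemma pd_g (i j l : Fin 2) : pd i (fun q => indMetric φ q j l) p =
    pdV i (pdV j φ) p ⬝ᵥ pdV l φ p + pdV j φ p ⬝ᵥ pdV i (pdV l φ) p := by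
  have hdj : ∀ a : Fin 3, DifferentiableAt ℝ (fun q => pdV j φ q a) p := fun a =>
    (contDiffAt_apply_fin3 (smooth_e hU hφ hp j) a).differentiableAt (by norm_cast)
  have hdl : ∀ a : Fin 3, DifferentiableAt ℝ (fun q => pdV l φ q a) p := fun a =>
    (contDiffAt_apply_fin3 (smooth_e hU hφ hp l) a).differentiableAt (by norm_cast)
  have h1 : (fun q => indMetric φ q j l) = fun q => ∑ a, pdV j φ q a * pdV l φ q a := rfl
  rw [h1, pd_sum (fun a => (hdj a).fun_mul (hdl a))]
  have h2 : ∀ a : Fin 3, pd i (fun q => pdV j φ q a * pdV l φ q a) p =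
      pdV i (pdV j φ) p a * pdV l φ p a + pdV j φ p a * pdV i (pdV l φ) p a := by
    intro a
    rw [pd_mul (hdj a) (hdl a),
      pdV_apply ((smooth_e hU hφ hp j).differentiableAt (by norm_cast)),
      pdV_apply ((smooth_e hU hφ hp l).differentiableAt (by norm_cast))]
  simp only [h2, dotProduct]
  rw [Finset.sum_add_distrib]
end geo2

section geo3
variable {U : Set Pt} {φ : Pt → Vec3}
variable (hU : IsOpen U) (hφ : IsImmersionOn φ U) {p : Pt} (hp : p ∈ U)
include hU hφ hp

lemma w_symm (i j : Fin 2) : pdV i (pdV j φ) p = pdV j (pdV i φ) p :=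
  pdV_comm_s2 (smooth_phi hU hφ hp)

lemma h_symm (i j : Fin 2) : sff φ p i j = sff φ p j i := by
  show unitNormal φ p ⬝ᵥ pdV i (pdV j φ) p = unitNormal φ p ⬝ᵥ pdV j (pdV i φ) p
  rw [w_symm hU hφ hp]

lemma wdot (i j l : Fin 2) : pdV i (pdV j φ) p ⬝ᵥ pdV l φ p =
    (1/2) * (pd i (fun q => indMetric φ q j l) p + pd j (fun q => indMetric φ q i l) p
      - pd l (fun q => indMetric φ q i j) p) := by
  rw [pd_g hU hφ hp i j l, pd_g hU hφ hp j i l, pd_g hU hφ hp l i j]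
  rw [show pdV j (pdV i φ) p = pdV i (pdV j φ) p from w_symm hU hφ hp j i,
    show pdV l (pdV i φ) p = pdV i (pdV l φ) p from w_symm hU hφ hp l i,
    show pdV l (pdV j φ) p = pdV j (pdV l φ) p from w_symm hU hφ hp l j,
    dotProduct_comm (pdV j φ p) (pdV i (pdV l φ) p),
    dotProduct_comm (pdV i (pdV l φ) p) (pdV j φ p)]
  ring

lemma lower (i j l : Fin 2) :
    ∑ k, christoffel (indMetric φ) k i j p * indMetric φ p k l =
      pdV i (pdV j φ) p ⬝ᵥ pdV l φ p := by
  rw [wdot hU hφ hp i j l]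
  have hd : (indMetric φ p).det ≠ 0 := ne_of_gt (detg_pos hU hφ hp)
  have hdet : (indMetric φ p).det = indMetric φ p 0 0 * indMetric φ p 1 1
      - indMetric φ p 0 1 * indMetric φ p 1 0 := Matrix.det_fin_two _
  have hsym : indMetric φ p 1 0 = indMetric φ p 0 1 := g_symm p 1 0
  have hd' : indMetric φ p 0 0 * indMetric φ p 1 1
      - indMetric φ p 0 1 * indMetric φ p 0 1 ≠ 0 := by
    rw [hdet, hsym] at hd; exact hd
  have hi : ∀ k l', (indMetric φ p)⁻¹ k l' = (indMetric φ p 0 0 * indMetric φ p 1 1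
      - indMetric φ p 0 1 * indMetric φ p 0 1)⁻¹ *
      (!![indMetric φ p 1 1, -(indMetric φ p 0 1);
      -(indMetric φ p 0 1), indMetric φ p 0 0] k l') := by
    intro k l'
    rw [ginv_eq, hdet, hsym]
    simp
  show ∑ k, ((1/2 : ℝ) * ∑ l', (indMetric φ p)⁻¹ k l' *
    (pd i (fun q => indMetric φ q j l') p + pd j (fun q => indMetric φ q i l') p
      - pd l' (fun q => indMetric φ q i j) p)) * indMetric φ p k l = _
  simp only [Fin.sum_univ_two, hi]
  fin_cases l <;>
  · simp only [Matrix.cons_val_zero, Matrix.cons_val_one, Matrix.head_cons, Matrix.cons_val',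
      Matrix.empty_val', Matrix.cons_val_fin_one, Matrix.head_fin_const, Fin.isValue,
      Fin.zero_eta, Fin.mk_one, Matrix.of_apply]
    try rw [hsym]
    field_simp [hd', show indMetric φ p 0 0 * indMetric φ p 1 1 - indMetric φ p 0 1 ^ 2 ≠ 0 by
      rwa [sq], show -indMetric φ p 0 1 ^ 2 + indMetric φ p 1 1 * indMetric φ p 0 0 ≠ 0 by
      rw [sq]; intro h; apply hd'; linarith]
    ring

lemma gauss_formula (i j : Fin 2) : pdV i (pdV j φ) p = fun a =>
    (∑ k, christoffel (indMetric φ) k i j p * pdV k φ p a) + sff φ p i j * unitNormal φ p a := by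
  set RHS : Vec3 := fun a =>
    (∑ k, christoffel (indMetric φ) k i j p * pdV k φ p a) + sff φ p i j * unitNormal φ p a with hRHS
  set M : Matrix (Fin 3) (Fin 3) ℝ := Matrix.of ![pdV 0 φ p, pdV 1 φ p, unitNormal φ p] with hM
  have hdet : M.det ≠ 0 := by
    rw [hM, triple]
    show unitNormal φ p ⬝ᵥ crossProduct (pdV 0 φ p) (pdV 1 φ p) ≠ 0
    have hcc := cc_pos hU hφ hp
    show ((Real.sqrt _)⁻¹ • crossProduct (pdV 0 φ p) (pdV 1 φ p)) ⬝ᵥ _ ≠ 0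
    rw [smul_dotProduct, smul_eq_mul]
    exact mul_ne_zero (inv_ne_zero (ne_of_gt (Real.sqrt_pos.mpr hcc))) (ne_of_gt hcc)
  have hdots : ∀ x : Vec3, x ⬝ᵥ RHS =
      (∑ k, christoffel (indMetric φ) k i j p * (x ⬝ᵥ pdV k φ p))
        + sff φ p i j * (x ⬝ᵥ unitNormal φ p) := by
    intro x
    simp only [hRHS, dotProduct, Fin.sum_univ_three, Fin.sum_univ_two]
    ring
  have he : ∀ l : Fin 2, pdV l φ p ⬝ᵥ pdV i (pdV j φ) p = pdV l φ p ⬝ᵥ RHS := by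
    intro l
    rw [hdots]
    have h1 : pdV l φ p ⬝ᵥ pdV i (pdV j φ) p = pdV i (pdV j φ) p ⬝ᵥ pdV l φ p :=
      dotProduct_comm _ _
    have h2 : ∀ k : Fin 2, pdV l φ p ⬝ᵥ pdV k φ p = indMetric φ p k l := fun k => g_symm p l k
    have h3 : pdV l φ p ⬝ᵥ unitNormal φ p = 0 := by
      rw [dotProduct_comm]; exact N_dot_e p l
    rw [h1, ← lower hU hφ hp i j l, h3, mul_zero, add_zero]
    exact (Finset.sum_congr rfl fun k _ => by rw [h2]).symm
  have hN : unitNormal φ p ⬝ᵥ pdV i (pdV j φ) p = unitNormal φ p ⬝ᵥ RHS := by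
    rw [hdots, N_dot_w p i j, N_dot_N hU hφ hp, mul_one]
    have : ∀ k : Fin 2, unitNormal φ p ⬝ᵥ pdV k φ p = 0 := fun k => N_dot_e p k
    simp [this]
  have hmv : M.mulVec (pdV i (pdV j φ) p) = M.mulVec RHS := by
    funext m
    fin_cases m <;>
      simp only [Matrix.mulVec, hM, Matrix.of_apply, Matrix.cons_val_zero, Matrix.cons_val_one,
        Matrix.head_cons, Matrix.cons_val_two, Matrix.tail_cons]
    · exact he 0
    · exact he 1
    · exact hN
  have hinj : Function.Injective M.mulVec :=
    Matrix.mulVec_injective_iff_isUnit.2 ((Matrix.isUnit_iff_isUnit_det M).2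
      (isUnit_iff_ne_zero.2 hdet))
  exact hinj hmv

lemma dN_dot_e (i b : Fin 2) :
    pdV i (unitNormal φ) p ⬝ᵥ pdV b φ p = - sff φ p i b := by
  have hzero : (fun q => ∑ a, unitNormal φ q a * pdV b φ q a) = fun _ => (0 : ℝ) := by
    funext q
    exact N_dot_e q b
  have hdN : ∀ a : Fin 3, DifferentiableAt ℝ (fun q => unitNormal φ q a) p := fun a =>
    (contDiffAt_apply_fin3 (smooth_N hU hφ hp) a).differentiableAt (by norm_cast)
  have hde : ∀ a : Fin 3, DifferentiableAt ℝ (fun q => pdV b φ q a) p := fun a =>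
    (contDiffAt_apply_fin3 (smooth_e hU hφ hp b) a).differentiableAt (by norm_cast)
  have h0 : pd i (fun q => ∑ a, unitNormal φ q a * pdV b φ q a) p = 0 := by
    rw [hzero]
    simp [pd]
  rw [pd_sum (fun a => (hdN a).fun_mul (hde a))] at h0
  have hterm : ∀ a : Fin 3, pd i (fun q => unitNormal φ q a * pdV b φ q a) p =
      pdV i (unitNormal φ) p a * pdV b φ p a + unitNormal φ p a * pdV i (pdV b φ) p a := by
    intro a
    rw [pd_mul (hdN a) (hde a),
      pdV_apply ((smooth_N hU hφ hp).differentiableAt (by norm_cast)),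
      pdV_apply ((smooth_e hU hφ hp b).differentiableAt (by norm_cast))]
  simp only [hterm, Finset.sum_add_distrib] at h0
  have : pdV i (unitNormal φ) p ⬝ᵥ pdV b φ p + unitNormal φ p ⬝ᵥ pdV i (pdV b φ) p = 0 := h0
  rw [N_dot_w p i b] at this
  linarith
end geo3

section geo4
variable {U : Set Pt} {φ : Pt → Vec3}

lemma christoffel_symm (k i j : Fin 2) :
    christoffel (indMetric φ) k i j = christoffel (indMetric φ) k j i := by
  funext q
  unfold christoffel
  congr 1
  apply Finset.sum_congr rfl
  intro l _
  have e1 : (fun r => indMetric φ r i j) = (fun r => indMetric φ r j i) :=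
    funext fun r => g_symm r i j
  rw [e1]
  ring

variable (hU : IsOpen U) (hφ : IsImmersionOn φ U) {p : Pt} (hp : p ∈ U)
include hU hφ hp

lemma deriv_formula (m i j : Fin 2) :
    pdV m (fun q => fun a => (∑ k, christoffel (indMetric φ) k i j q * pdV k φ q a)
      + sff φ q i j * unitNormal φ q a) p ⬝ᵥ pdV 0 φ p
    = (∑ k, pd m (christoffel (indMetric φ) k i j) p * indMetric φ p k 0)
      + (∑ k, christoffel (indMetric φ) k i j p * (pdV m (pdV k φ) p ⬝ᵥ pdV 0 φ p))
      - sff φ p i j * sff φ p m 0 := by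
  have d1 : ∀ k : Fin 2, DifferentiableAt ℝ (christoffel (indMetric φ) k i j) p := fun k =>
    (smooth_christoffel hU hφ hp k i j).differentiableAt (by norm_cast)
  have d2 : ∀ (k : Fin 2) (a : Fin 3), DifferentiableAt ℝ (fun q => pdV k φ q a) p := fun k a =>
    (contDiffAt_apply_fin3 (smooth_e hU hφ hp k) a).differentiableAt (by norm_cast)
  have d3 : DifferentiableAt ℝ (fun q => sff φ q i j) p :=
    (smooth_h hU hφ hp i j).differentiableAt (by norm_cast)
  have d4 : ∀ a : Fin 3, DifferentiableAt ℝ (fun q => unitNormal φ q a) p := fun a =>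
    (contDiffAt_apply_fin3 (smooth_N hU hφ hp) a).differentiableAt (by norm_cast)
  have dF : DifferentiableAt ℝ (fun q => fun a =>
      (∑ k, christoffel (indMetric φ) k i j q * pdV k φ q a)
        + sff φ q i j * unitNormal φ q a) p := by
    apply differentiableAt_pi.mpr
    intro a
    exact (DifferentiableAt.fun_sum fun k _ => (d1 k).fun_mul (d2 k a)).fun_add (d3.fun_mul (d4 a))
  have hcomp : ∀ a : Fin 3,
      pdV m (fun q => fun a => (∑ k, christoffel (indMetric φ) k i j q * pdV k φ q a)
        + sff φ q i j * unitNormal φ q a) p a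
      = (∑ k, (pd m (christoffel (indMetric φ) k i j) p * pdV k φ p a
          + christoffel (indMetric φ) k i j p * pdV m (pdV k φ) p a))
        + (pd m (fun q => sff φ q i j) p * unitNormal φ p a
          + sff φ p i j * pdV m (unitNormal φ) p a) := by
    intro a
    rw [pdV_apply dF a]
    have step : pd m (fun q => (∑ k, christoffel (indMetric φ) k i j q * pdV k φ q a)
        + sff φ q i j * unitNormal φ q a) p
        = pd m (fun q => ∑ k, christoffel (indMetric φ) k i j q * pdV k φ q a) p
          + pd m (fun q => sff φ q i j * unitNormal φ q a) p :=
      pd_add (DifferentiableAt.fun_sum fun k _ => (d1 k).fun_mul (d2 k a)) (d3.fun_mul (d4 a))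
    rw [step, pd_sum (fun k => (d1 k).fun_mul (d2 k a)),
      pd_mul d3 (d4 a), pdV_apply ((smooth_N hU hφ hp).differentiableAt (by norm_cast)) a]
    congr 1
    apply Finset.sum_congr rfl
    intro k _
    rw [pd_mul (d1 k) (d2 k a),
      pdV_apply ((smooth_e hU hφ hp k).differentiableAt (by norm_cast)) a]
  have f1 : pdV m (unitNormal φ) p ⬝ᵥ pdV 0 φ p = - sff φ p m 0 := dN_dot_e hU hφ hp m 0
  have f2 : unitNormal φ p ⬝ᵥ pdV 0 φ p = 0 := N_dot_e p 0
  have hG : ∀ k : Fin 2, indMetric φ p k 0 = pdV k φ p ⬝ᵥ pdV 0 φ p := fun k => rfl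
  simp only [dotProduct, Fin.sum_univ_three] at f1 f2 ⊢
  simp only [hcomp]
  simp only [Fin.sum_univ_two]
  simp only [hG, dotProduct, Fin.sum_univ_three]
  linear_combination sff φ p i j * f1 + pd m (fun q => sff φ q i j) p * f2

lemma main_identity :
    (∑ k, pd 0 (christoffel (indMetric φ) k 1 1) p * indMetric φ p k 0)
      + (∑ k, christoffel (indMetric φ) k 1 1 p *
          (∑ l, christoffel (indMetric φ) l 0 k p * indMetric φ p l 0))
      - sff φ p 1 1 * sff φ p 0 0
    = (∑ k, pd 1 (christoffel (indMetric φ) k 0 1) p * indMetric φ p k 0)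
      + (∑ k, christoffel (indMetric φ) k 0 1 p *
          (∑ l, christoffel (indMetric φ) l 1 k p * indMetric φ p l 0))
      - sff φ p 0 1 * sff φ p 1 0 := by
  have hw : ∀ (i j : Fin 2), pdV i (pdV j φ) =ᶠ[nhds p]
      (fun q => fun a => (∑ k, christoffel (indMetric φ) k i j q * pdV k φ q a)
        + sff φ q i j * unitNormal φ q a) := fun i j =>
    Filter.eventually_of_mem (hU.mem_nhds hp) (fun q hq => gauss_formula hU hφ hq i j)
  have hA : pdV 0 (pdV 1 (pdV 1 φ)) p =
      pdV 0 (fun q => fun a => (∑ k, christoffel (indMetric φ) k 1 1 q * pdV k φ q a)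
        + sff φ q 1 1 * unitNormal φ q a) p := pdV_congr (hw 1 1)
  have hB : pdV 1 (pdV 0 (pdV 1 φ)) p =
      pdV 1 (fun q => fun a => (∑ k, christoffel (indMetric φ) k 0 1 q * pdV k φ q a)
        + sff φ q 0 1 * unitNormal φ q a) p := pdV_congr (hw 0 1)
  have hC : pdV 0 (pdV 1 (pdV 1 φ)) p = pdV 1 (pdV 0 (pdV 1 φ)) p :=
    pdV_comm_s2 (contDiffAt_pdV (smooth_phi hU hφ hp))
  have E := congrArg (fun v : Vec3 => v ⬝ᵥ pdV 0 φ p) (hA.symm.trans (hC.trans hB))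
  rw [deriv_formula hU hφ hp 0 1 1, deriv_formula hU hφ hp 1 0 1] at E
  have hl : ∀ m k : Fin 2, pdV m (pdV k φ) p ⬝ᵥ pdV 0 φ p =
      ∑ l, christoffel (indMetric φ) l m k p * indMetric φ p l 0 := fun m k =>
    (lower hU hφ hp m k 0).symm
  simp only [hl] at E
  exact E

lemma R_eq_det_sff : R1212 (indMetric φ) p = (sff φ p).det := by
  have E := main_identity hU hφ hp
  have hcs : ∀ k : Fin 2, christoffel (indMetric φ) k 1 0 = christoffel (indMetric φ) k 0 1 :=
    fun k => christoffel_symm k 1 0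
  have hgs : indMetric φ p 1 0 = indMetric φ p 0 1 := g_symm p 1 0
  have hhs : sff φ p 1 0 = sff φ p 0 1 := h_symm hU hφ hp 1 0
  rw [show (sff φ p).det = sff φ p 0 0 * sff φ p 1 1 - sff φ p 0 1 * sff φ p 1 0 from
    Matrix.det_fin_two _]
  show (∑ m, indMetric φ p 0 m *
    (pd 0 (christoffel (indMetric φ) m 1 1) p - pd 1 (christoffel (indMetric φ) m 1 0) p +
      ∑ l, (christoffel (indMetric φ) m 0 l p * christoffel (indMetric φ) l 1 1 p -
            christoffel (indMetric φ) m 1 l p * christoffel (indMetric φ) l 1 0 p))) = _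
  simp only [hcs] at E ⊢
  rw [hhs] at E ⊢
  simp only [Fin.sum_univ_two] at E ⊢
  rw [hgs] at E
  linear_combination E
end geo4

/-- **Gauss equation.** For a smooth immersion `φ : U → ℝ³` with induced metric `g` and
second fundamental form `h`, one has `det(g⁻¹ h) = K`, where `K` is the Gauss curvature
computed intrinsically from `g`. -/
theorem gauss_equation
    (U : Set Pt) (hU : IsOpen U)
    (φ : Pt → Vec3) (hφ : IsImmersionOn φ U) :
    ∀ p ∈ U, ((indMetric φ p)⁻¹ * sff φ p).det = gaussK (indMetric φ) p := by
  intro p hp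
  have hdet : (0:ℝ) < (indMetric φ p).det := detg_pos hU hφ hp
  rw [Matrix.det_mul, Matrix.det_nonsing_inv, Ring.inverse_eq_inv',
    ← R_eq_det_sff hU hφ hp]
  show ((indMetric φ p).det)⁻¹ * R1212 (indMetric φ) p
      = R1212 (indMetric φ) p / (indMetric φ p).det
  rw [div_eq_inv_mul]
end
end

section
/- Let U ⊆ ℝ² be open and φ : U → ℝ³ a smooth immersion with induced metric g and second fundamental form h. Then the Codazzi equations hold: ∇_i h_{jk} − ∇_j h_{ik} = 0 on U for all i, j, k ∈ {1,2}, where ∇ is the covariant derivative of the induced metric g; equivalently, ∇h is a totally symmetric 3-tensor. -/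
noncomputable section
open Matrix Real

namespace Codazzi

lemma le1 : (1 : WithTop ℕ∞) ≤ ((⊤:ℕ∞) : WithTop ℕ∞) :=
  ENat.natCast_le_of_coe_top_le_withTop le_rfl 1

lemma le2 : (2 : WithTop ℕ∞) ≤ ((⊤:ℕ∞) : WithTop ℕ∞) :=
  ENat.natCast_le_of_coe_top_le_withTop le_rfl 2

lemma leS : ((⊤:ℕ∞) : WithTop ℕ∞) + 1 ≤ ((⊤:ℕ∞) : WithTop ℕ∞) := by norm_cast

/-! ### Generic calculus lemmas -/

lemma contDiffAt_pd {f : Pt → ℝ} {q : Pt} (hf : ContDiffAt ℝ (⊤:ℕ∞) f q) (i : Fin 2) :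
    ContDiffAt ℝ (⊤:ℕ∞) (pd i f) q :=
  (hf.fderiv_right leS).clm_apply contDiffAt_const

lemma contDiffAt_pdV {f : Pt → Vec3} {q : Pt} (hf : ContDiffAt ℝ (⊤:ℕ∞) f q) (i : Fin 2) :
    ContDiffAt ℝ (⊤:ℕ∞) (pdV i f) q :=
  (hf.fderiv_right leS).clm_apply contDiffAt_const

lemma contDiffAt_comp_apply {f : Pt → Vec3} {q : Pt} (hf : ContDiffAt ℝ (⊤:ℕ∞) f q) (a : Fin 3) :
    ContDiffAt ℝ (⊤:ℕ∞) (fun x => f x a) q := contDiffAt_pi.1 hf a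

lemma pdV_apply {f : Pt → Vec3} {q : Pt} (hf : DifferentiableAt ℝ f q) (i : Fin 2) (a : Fin 3) :
    pdV i f q a = pd i (fun x => f x a) q := by
  have hcomp : (fun x => f x a)
      = (⇑(ContinuousLinearMap.proj (R := ℝ) (φ := fun _ : Fin 3 => ℝ) a) ∘ f) := rfl
  have h := ((ContinuousLinearMap.proj (R := ℝ) (φ := fun _ : Fin 3 => ℝ)
      a).hasFDerivAt.comp q hf.hasFDerivAt).fderiv
  simp only [pd, pdV, hcomp, h, ContinuousLinearMap.coe_comp', Function.comp_apply,
    ContinuousLinearMap.proj_apply]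

lemma pd_congr_nhds {f g : Pt → ℝ} {q : Pt} (h : f =ᶠ[nhds q] g) (i : Fin 2) :
    pd i f q = pd i g q := by
  unfold pd; rw [h.fderiv_eq]

lemma pd_mul {f g : Pt → ℝ} {q : Pt} (hf : DifferentiableAt ℝ f q) (hg : DifferentiableAt ℝ g q)
    (i : Fin 2) :
    pd i (fun x => f x * g x) q = pd i f q * g q + f q * pd i g q := by
  unfold pd; rw [fderiv_fun_mul hf hg]; simp; ring

lemma pd_sum {F : Fin 3 → Pt → ℝ} {q : Pt} (hF : ∀ a, DifferentiableAt ℝ (F a) q) (i : Fin 2) :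
    pd i (fun x => ∑ a, F a x) q = ∑ a, pd i (F a) q := by
  unfold pd
  rw [fderiv_fun_sum (fun a _ => hF a)]
  simp

lemma pd_comm {u : Pt → ℝ} {q : Pt} (hu : ContDiffAt ℝ (⊤:ℕ∞) u q) (i j : Fin 2) :
    pd i (pd j u) q = pd j (pd i u) q := by
  have hsym : IsSymmSndFDerivAt ℝ u q := hu.isSymmSndFDerivAt (by simpa using le2)
  have hd : DifferentiableAt ℝ (fderiv ℝ u) q :=
    (hu.fderiv_right leS).differentiableAt (by simp)
  have key : ∀ k l : Fin 2, pd k (pd l u) q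
      = fderiv ℝ (fderiv ℝ u) q (Pi.single k 1) (Pi.single l 1) := by
    intro k l
    have hcomp : pd l u
        = (⇑((ContinuousLinearMap.apply ℝ ℝ) ((Pi.single l 1 : Pt))) ∘ fderiv ℝ u) := rfl
    have h := (((ContinuousLinearMap.apply ℝ ℝ) ((Pi.single l 1 : Pt))).hasFDerivAt.comp q
      hd.hasFDerivAt).fderiv
    rw [← hcomp] at h
    simp only [pd, h, ContinuousLinearMap.coe_comp', Function.comp_apply,
      ContinuousLinearMap.apply_apply]
  rw [key i j, key j i, hsym.eq]

lemma pd_dot {F G : Pt → Vec3} {q : Pt} (hF : ContDiffAt ℝ (⊤:ℕ∞) F q)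
    (hG : ContDiffAt ℝ (⊤:ℕ∞) G q) (i : Fin 2) :
    pd i (fun x => F x ⬝ᵥ G x) q = pdV i F q ⬝ᵥ G q + F q ⬝ᵥ pdV i G q := by
  have hFa : ∀ a, DifferentiableAt ℝ (fun x => F x a) q :=
    fun a => (contDiffAt_comp_apply hF a).differentiableAt (by simp)
  have hGa : ∀ a, DifferentiableAt ℝ (fun x => G x a) q :=
    fun a => (contDiffAt_comp_apply hG a).differentiableAt (by simp)
  have h1 : (fun x => F x ⬝ᵥ G x) = fun x => ∑ a, (fun y => F y a * G y a) x := rfl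
  rw [h1, pd_sum (F := fun a y => F y a * G y a) (fun a => (hFa a).mul (hGa a)) i]
  simp only [dotProduct]
  rw [← Finset.sum_add_distrib]
  apply Finset.sum_congr rfl
  intro a _
  rw [pd_mul (hFa a) (hGa a) i]
  try rw [pdV_apply (hF.differentiableAt (by simp)) i a]
  try rw [pdV_apply (hG.differentiableAt (by simp)) i a]

lemma pdV_pdV_comm {U : Set Pt} (hU : IsOpen U) {f : Pt → Vec3}
    (hf : ∀ x ∈ U, ContDiffAt ℝ (⊤:ℕ∞) f x) {q : Pt} (hq : q ∈ U) (i j : Fin 2) :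
    pdV i (pdV j f) q = pdV j (pdV i f) q := by
  funext a
  have hUq : U ∈ nhds q := hU.mem_nhds hq
  have hev : ∀ l : Fin 2, (fun x => pdV l f x a) =ᶠ[nhds q] (fun x => pd l (fun y => f y a) x) := by
    intro l
    filter_upwards [hUq] with x hx
    exact pdV_apply ((hf x hx).differentiableAt (by simp)) l a
  have hd : ∀ l : Fin 2, DifferentiableAt ℝ (pdV l f) q :=
    fun l => (contDiffAt_pdV (hf q hq) l).differentiableAt (by simp)
  rw [pdV_apply (hd j) i a, pd_congr_nhds (hev j) i,
    pd_comm (contDiffAt_comp_apply (hf q hq) a) i j,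
    ← pd_congr_nhds (hev i) j, ← pdV_apply (hd i) j a]

/-! ### Geometric lemmas -/

variable {U : Set Pt} {φ : Pt → Vec3} {q : Pt}

/-- The (unnormalized) normal vector. -/
def cFun (φ : Pt → Vec3) : Pt → Vec3 := fun q => crossProduct (pdV 0 φ q) (pdV 1 φ q)

lemma smooth_phi (hU : IsOpen U) (hφ : IsImmersionOn φ U) :
    ∀ x ∈ U, ContDiffAt ℝ (⊤:ℕ∞) φ x :=
  fun x hx => (hφ.1.contDiffAt (hU.mem_nhds hx))

lemma smooth_E (hU : IsOpen U) (hφ : IsImmersionOn φ U) (i : Fin 2) :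
    ∀ x ∈ U, ContDiffAt ℝ (⊤:ℕ∞) (pdV i φ) x :=
  fun x hx => contDiffAt_pdV (smooth_phi hU hφ x hx) i

lemma cc_eq_det (φ : Pt → Vec3) (q : Pt) :
    cFun φ q ⬝ᵥ cFun φ q = (indMetric φ q).det := by
  simp [cFun, indMetric, Matrix.det_fin_two, cross_apply, dotProduct,
    Fin.sum_univ_three]
  ring

lemma cc_ne (hφ : IsImmersionOn φ U) (hq : q ∈ U) :
    cFun φ q ⬝ᵥ cFun φ q ≠ 0 := by
  intro hzero
  have hdet : (indMetric φ q).det = 0 := by rw [← cc_eq_det]; exact hzero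
  obtain ⟨v, hv0, hv⟩ := (Matrix.exists_mulVec_eq_zero_iff).2 hdet
  have hww : (v 0 • pdV 0 φ q + v 1 • pdV 1 φ q) ⬝ᵥ (v 0 • pdV 0 φ q + v 1 • pdV 1 φ q)
      = v ⬝ᵥ (indMetric φ q).mulVec v := by
    simp [indMetric, Matrix.mulVec, dotProduct, Fin.sum_univ_two, Fin.sum_univ_three]
    ring
  rw [hv] at hww
  simp only [dotProduct_zero] at hww
  have hwz : v 0 • pdV 0 φ q + v 1 • pdV 1 φ q = 0 := dotProduct_self_eq_zero.1 hww
  have hli := Fintype.linearIndependent_iff.1 (hφ.2 q hq) v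
  apply hv0
  funext s
  exact hli (by rw [Fin.sum_univ_two]; simpa using hwz) s

lemma cc_pos (hφ : IsImmersionOn φ U) (hq : q ∈ U) :
    0 < cFun φ q ⬝ᵥ cFun φ q := by
  rcases lt_of_le_of_ne (Finset.sum_nonneg fun a _ => mul_self_nonneg _)
    (Ne.symm (cc_ne hφ hq)) with h
  exact h

lemma sqrt_ne (hφ : IsImmersionOn φ U) (hq : q ∈ U) :
    Real.sqrt (cFun φ q ⬝ᵥ cFun φ q) ≠ 0 :=
  ne_of_gt (Real.sqrt_pos.2 (cc_pos hφ hq))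

lemma smooth_c (hU : IsOpen U) (hφ : IsImmersionOn φ U) :
    ∀ x ∈ U, ContDiffAt ℝ (⊤:ℕ∞) (cFun φ) x := by
  intro x hx
  have h0 := smooth_E hU hφ 0 x hx
  have h1 := smooth_E hU hφ 1 x hx
  apply contDiffAt_pi.2
  intro a
  fin_cases a <;> simp only [cFun, cross_apply] <;> simp
  · exact ((contDiffAt_comp_apply h0 1).mul (contDiffAt_comp_apply h1 2)).sub
      ((contDiffAt_comp_apply h0 2).mul (contDiffAt_comp_apply h1 1))
  · exact ((contDiffAt_comp_apply h0 2).mul (contDiffAt_comp_apply h1 0)).sub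
      ((contDiffAt_comp_apply h0 0).mul (contDiffAt_comp_apply h1 2))
  · exact ((contDiffAt_comp_apply h0 0).mul (contDiffAt_comp_apply h1 1)).sub
      ((contDiffAt_comp_apply h0 1).mul (contDiffAt_comp_apply h1 0))

lemma smooth_cc (hU : IsOpen U) (hφ : IsImmersionOn φ U) :
    ∀ x ∈ U, ContDiffAt ℝ (⊤:ℕ∞) (fun y => cFun φ y ⬝ᵥ cFun φ y) x := by
  intro x hx
  have hc := smooth_c hU hφ x hx
  simp only [dotProduct]
  exact ContDiffAt.sum fun a _ =>
    (contDiffAt_comp_apply hc a).mul (contDiffAt_comp_apply hc a)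

lemma unitNormal_eq (φ : Pt → Vec3) :
    unitNormal φ = fun q => (Real.sqrt (cFun φ q ⬝ᵥ cFun φ q))⁻¹ • cFun φ q := rfl

lemma smooth_n (hU : IsOpen U) (hφ : IsImmersionOn φ U) :
    ∀ x ∈ U, ContDiffAt ℝ (⊤:ℕ∞) (unitNormal φ) x := by
  intro x hx
  rw [unitNormal_eq]
  have hs : ContDiffAt ℝ (⊤:ℕ∞) (fun y => Real.sqrt (cFun φ y ⬝ᵥ cFun φ y)) x :=
    (Real.contDiffAt_sqrt (ne_of_gt (cc_pos hφ hx))).comp x (smooth_cc hU hφ x hx)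
  exact (hs.inv (sqrt_ne hφ hx)).smul (smooth_c hU hφ x hx)

lemma n_dot_n (hφ : IsImmersionOn φ U) (hq : q ∈ U) :
    unitNormal φ q ⬝ᵥ unitNormal φ q = 1 := by
  have hpos := cc_pos hφ hq
  rw [unitNormal_eq]
  rw [smul_dotProduct, dotProduct_smul, smul_eq_mul, smul_eq_mul,
    show (Real.sqrt (cFun φ q ⬝ᵥ cFun φ q))⁻¹ * ((Real.sqrt (cFun φ q ⬝ᵥ cFun φ q))⁻¹ *
      (cFun φ q ⬝ᵥ cFun φ q)) = (cFun φ q ⬝ᵥ cFun φ q) /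
      (Real.sqrt (cFun φ q ⬝ᵥ cFun φ q) * Real.sqrt (cFun φ q ⬝ᵥ cFun φ q)) from by ring,
    Real.mul_self_sqrt hpos.le, div_self (ne_of_gt hpos)]

lemma c_dot_E (φ : Pt → Vec3) (q : Pt) (j : Fin 2) :
    cFun φ q ⬝ᵥ pdV j φ q = 0 := by
  fin_cases j
  · rw [dotProduct_comm]; exact dot_self_cross _ _
  · rw [dotProduct_comm]; exact dot_cross_self _ _

lemma n_dot_E (hφ : IsImmersionOn φ U) (hq : q ∈ U) (j : Fin 2) :
    unitNormal φ q ⬝ᵥ pdV j φ q = 0 := by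
  rw [unitNormal_eq, smul_dotProduct, c_dot_E, smul_zero]

lemma n_dot_c (hφ : IsImmersionOn φ U) (hq : q ∈ U) :
    unitNormal φ q ⬝ᵥ cFun φ q = Real.sqrt (cFun φ q ⬝ᵥ cFun φ q) := by
  have hpos := cc_pos hφ hq
  rw [unitNormal_eq, smul_dotProduct, smul_eq_mul,
    show (Real.sqrt (cFun φ q ⬝ᵥ cFun φ q))⁻¹ * (cFun φ q ⬝ᵥ cFun φ q)
      = (Real.sqrt (cFun φ q ⬝ᵥ cFun φ q))⁻¹ *
        (Real.sqrt (cFun φ q ⬝ᵥ cFun φ q) * Real.sqrt (cFun φ q ⬝ᵥ cFun φ q)) from by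
      rw [Real.mul_self_sqrt hpos.le],
    ← mul_assoc, inv_mul_cancel₀ (sqrt_ne hφ hq), one_mul]

lemma gsymm (φ : Pt → Vec3) : ∀ (x : Pt) (a b : Fin 2), indMetric φ x a b = indMetric φ x b a :=
  fun x a b => by simp only [indMetric, Matrix.of_apply]; exact dotProduct_comm _ _

lemma pd_metric (hU : IsOpen U) (hφ : IsImmersionOn φ U) (hq : q ∈ U) (a b c : Fin 2) :
    pd a (fun x => indMetric φ x b c) q
      = pdV a (pdV b φ) q ⬝ᵥ pdV c φ q + pdV b φ q ⬝ᵥ pdV a (pdV c φ) q := by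
  have h : (fun x => indMetric φ x b c) = fun x => pdV b φ x ⬝ᵥ pdV c φ x := rfl
  rw [h, pd_dot (smooth_E hU hφ b q hq) (smooth_E hU hφ c q hq) a]

lemma christoffel_symm (φ : Pt → Vec3) (k i j : Fin 2) (q : Pt) :
    christoffel (indMetric φ) k j i q = christoffel (indMetric φ) k i j q := by
  have e : ∀ a b : Fin 2, (fun x => indMetric φ x a b) = (fun x => indMetric φ x b a) :=
    fun a b => funext fun x => gsymm φ x a b
  simp only [christoffel]
  congr 1
  apply Finset.sum_congr rfl
  intro l _
  rw [e j i]
  ring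

lemma det_ne (hφ : IsImmersionOn φ U) (hq : q ∈ U) : (indMetric φ q).det ≠ 0 := by
  rw [← cc_eq_det]; exact cc_ne hφ hq

lemma lower_christoffel (hU : IsOpen U) (hφ : IsImmersionOn φ U) (hq : q ∈ U) (i j k : Fin 2) :
    ∑ m, indMetric φ q k m * christoffel (indMetric φ) m i j q
      = (1/2) * (pd i (fun x => indMetric φ x j k) q + pd j (fun x => indMetric φ x i k) q
          - pd k (fun x => indMetric φ x i j) q) := by
  have hu : IsUnit (indMetric φ q).det := isUnit_iff_ne_zero.2 (det_ne hφ hq)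
  have hmul : ∀ l, (∑ m, indMetric φ q k m * (indMetric φ q)⁻¹ m l)
      = (1 : Matrix (Fin 2) (Fin 2) ℝ) k l := by
    intro l
    rw [← Matrix.mul_apply, Matrix.mul_nonsing_inv _ hu]
  have h0 := hmul 0
  have h1 := hmul 1
  simp only [Fin.sum_univ_two] at h0 h1
  simp only [christoffel, Fin.sum_univ_two]
  fin_cases k <;>
    simp only [Fin.zero_eta, Fin.mk_one] at h0 h1 ⊢ <;>
    norm_num [Matrix.one_apply] at h0 h1 <;>
    linear_combination
      ((1:ℝ)/2) * (pd i (fun x => indMetric φ x j 0) q + pd j (fun x => indMetric φ x i 0) q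
        - pd 0 (fun x => indMetric φ x i j) q) * h0 +
      ((1:ℝ)/2) * (pd i (fun x => indMetric φ x j 1) q + pd j (fun x => indMetric φ x i 1) q
        - pd 1 (fun x => indMetric φ x i j) q) * h1

lemma christoffel_contract (hU : IsOpen U) (hφ : IsImmersionOn φ U) (hq : q ∈ U) (i j k : Fin 2) :
    ∑ m, indMetric φ q k m * christoffel (indMetric φ) m i j q
      = pdV k φ q ⬝ᵥ pdV i (pdV j φ) q := by
  have hsm := smooth_phi hU hφ
  rw [lower_christoffel hU hφ hq i j k, pd_metric hU hφ hq i j k, pd_metric hU hφ hq j i k,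
    pd_metric hU hφ hq k i j,
    pdV_pdV_comm hU hsm hq j i, pdV_pdV_comm hU hsm hq k i, pdV_pdV_comm hU hsm hq k j,
    dotProduct_comm (pdV j φ q) (pdV i (pdV k φ) q),
    dotProduct_comm (pdV k φ q) (pdV i (pdV j φ) q)]
  ring

lemma vanish_of_dots {a b v : Vec3} (hc : (crossProduct a b) ⬝ᵥ (crossProduct a b) ≠ 0)
    (h1 : v ⬝ᵥ a = 0) (h2 : v ⬝ᵥ b = 0) (h3 : v ⬝ᵥ crossProduct a b = 0) : v = 0 := by
  by_contra hv
  apply hc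
  have hdet : (Matrix.of ![a, b, crossProduct a b]).det
      = crossProduct a b ⬝ᵥ crossProduct a b := by
    simp [Matrix.det_fin_three, cross_apply, dotProduct, Fin.sum_univ_three]
    ring
  have hMv : (Matrix.of ![a, b, crossProduct a b]).mulVec v = 0 := by
    funext s
    fin_cases s
    · simpa [Matrix.mulVec, dotProduct_comm] using h1
    · simpa [Matrix.mulVec, dotProduct_comm] using h2
    · simpa [Matrix.mulVec, dotProduct_comm] using h3
  rw [← hdet]
  exact Matrix.exists_mulVec_eq_zero_iff.1 ⟨v, hv, hMv⟩

lemma sff_eq (φ : Pt → Vec3) (q : Pt) (i j : Fin 2) :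
    sff φ q i j = unitNormal φ q ⬝ᵥ pdV i (pdV j φ) q := rfl

/-- The Gauss formula. -/
lemma gauss (hU : IsOpen U) (hφ : IsImmersionOn φ U) (hq : q ∈ U) (i j : Fin 2) :
    pdV i (pdV j φ) q = (∑ m, christoffel (indMetric φ) m i j q • pdV m φ q)
      + sff φ q i j • unitNormal φ q := by
  set T : Vec3 := pdV i (pdV j φ) q - ((∑ m, christoffel (indMetric φ) m i j q • pdV m φ q)
      + sff φ q i j • unitNormal φ q) with hT
  have hTE : ∀ k : Fin 2, T ⬝ᵥ pdV k φ q = 0 := by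
    intro k
    have hcontract := christoffel_contract hU hφ hq i j k
    have hnE := n_dot_E hφ hq k
    simp only [hT, Fin.sum_univ_two, sub_dotProduct, add_dotProduct, smul_dotProduct,
      smul_eq_mul] at *
    have e0 : pdV 0 φ q ⬝ᵥ pdV k φ q = indMetric φ q k 0 := by
      rw [gsymm φ q k 0]; rfl
    have e1 : pdV 1 φ q ⬝ᵥ pdV k φ q = indMetric φ q k 1 := by
      rw [gsymm φ q k 1]; rfl
    have hX : pdV i (pdV j φ) q ⬝ᵥ pdV k φ q = pdV k φ q ⬝ᵥ pdV i (pdV j φ) q :=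
      dotProduct_comm _ _
    linear_combination hX - hcontract - christoffel (indMetric φ) 0 i j q * e0
      - christoffel (indMetric φ) 1 i j q * e1 - sff φ q i j * hnE
  have hTc : T ⬝ᵥ cFun φ q = 0 := by
    have hnc := n_dot_c hφ hq
    simp only [hT, Fin.sum_univ_two, sub_dotProduct, add_dotProduct, smul_dotProduct,
      smul_eq_mul]
    have hE0 : pdV 0 φ q ⬝ᵥ cFun φ q = 0 := by
      rw [dotProduct_comm]; exact c_dot_E φ q 0
    have hE1 : pdV 1 φ q ⬝ᵥ cFun φ q = 0 := by
      rw [dotProduct_comm]; exact c_dot_E φ q 1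
    have hXc : pdV i (pdV j φ) q ⬝ᵥ cFun φ q
        = sff φ q i j * Real.sqrt (cFun φ q ⬝ᵥ cFun φ q) := by
      have h2 : sff φ q i j
          = (Real.sqrt (cFun φ q ⬝ᵥ cFun φ q))⁻¹ * (cFun φ q ⬝ᵥ pdV i (pdV j φ) q) := by
        rw [sff_eq]
        simp only [unitNormal_eq]
        rw [smul_dotProduct, smul_eq_mul]
      rw [dotProduct_comm, h2,
        mul_comm ((Real.sqrt (cFun φ q ⬝ᵥ cFun φ q))⁻¹) (cFun φ q ⬝ᵥ pdV i (pdV j φ) q),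
        mul_assoc, inv_mul_cancel₀ (sqrt_ne hφ hq), mul_one]
    rw [hE0, hE1, hXc, hnc]
    ring
  have hT0 : T = 0 := vanish_of_dots (cc_ne hφ hq) (hTE 0) (hTE 1) hTc
  rw [hT, sub_eq_zero] at hT0
  exact hT0

lemma n_dot_pdV (hU : IsOpen U) (hφ : IsImmersionOn φ U) (hq : q ∈ U) (i : Fin 2) :
    pdV i (unitNormal φ) q ⬝ᵥ unitNormal φ q = 0 := by
  have hev : (fun x => unitNormal φ x ⬝ᵥ unitNormal φ x) =ᶠ[nhds q] (fun _ => (1:ℝ)) := by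
    filter_upwards [hU.mem_nhds hq] with x hx
    exact n_dot_n hφ hx
  have h0 : pd i (fun x => unitNormal φ x ⬝ᵥ unitNormal φ x) q = 0 := by
    rw [pd_congr_nhds hev i]
    simp [pd]
  rw [pd_dot (smooth_n hU hφ q hq) (smooth_n hU hφ q hq) i,
    dotProduct_comm (unitNormal φ q) (pdV i (unitNormal φ) q)] at h0
  linarith

lemma weingarten (hU : IsOpen U) (hφ : IsImmersionOn φ U) (hq : q ∈ U) (i j : Fin 2) :
    pdV i (unitNormal φ) q ⬝ᵥ pdV j φ q = - sff φ q i j := by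
  have hev : (fun x => unitNormal φ x ⬝ᵥ pdV j φ x) =ᶠ[nhds q] (fun _ => (0:ℝ)) := by
    filter_upwards [hU.mem_nhds hq] with x hx
    exact n_dot_E hφ hx j
  have h0 : pd i (fun x => unitNormal φ x ⬝ᵥ pdV j φ x) q = 0 := by
    rw [pd_congr_nhds hev i]; simp [pd]
  rw [pd_dot (smooth_n hU hφ q hq) (smooth_E hU hφ j q hq) i, ← sff_eq] at h0
  linarith

lemma pd_sff (hU : IsOpen U) (hφ : IsImmersionOn φ U) (hq : q ∈ U) (i j k : Fin 2) :
    pd i (fun x => sff φ x j k) q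
      = -(∑ m, christoffel (indMetric φ) m j k q * sff φ q i m)
        + unitNormal φ q ⬝ᵥ pdV i (pdV j (pdV k φ)) q := by
  have hfun : (fun x => sff φ x j k) = fun x => unitNormal φ x ⬝ᵥ pdV j (pdV k φ) x := rfl
  have hsm : ContDiffAt ℝ (⊤:ℕ∞) (pdV j (pdV k φ)) q :=
    contDiffAt_pdV (contDiffAt_pdV (smooth_phi hU hφ q hq) k) j
  rw [hfun, pd_dot (smooth_n hU hφ q hq) hsm i, gauss hU hφ hq j k]
  simp only [Fin.sum_univ_two, dotProduct_add, dotProduct_smul, smul_eq_mul,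
    n_dot_pdV hU hφ hq i, weingarten hU hφ hq i 0, weingarten hU hφ hq i 1]
  ring

end Codazzi

/-- **Codazzi equations.** For a smooth immersion `φ : U → ℝ³` with induced metric `g` and
second fundamental form `h`, the covariant derivative `∇h` is totally symmetric:
`∇ᵢ h_{jk} = ∇ⱼ h_{ik}` for all `i, j, k`. -/
theorem codazzi_equations
    (U : Set Pt) (hU : IsOpen U)
    (φ : Pt → Vec3) (hφ : IsImmersionOn φ U) :
    ∀ p ∈ U, ∀ i j k : Fin 2,
      covD (indMetric φ) (sff φ) i j k p - covD (indMetric φ) (sff φ) j i k p = 0 := by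
  intro p hp i j k
  have hsmE : ∀ x ∈ U, ContDiffAt ℝ (⊤:ℕ∞) (pdV k φ) x := Codazzi.smooth_E hU hφ k
  have h3 : pdV i (pdV j (pdV k φ)) p = pdV j (pdV i (pdV k φ)) p :=
    Codazzi.pdV_pdV_comm hU hsmE hp i j
  have csymm : ∀ l, christoffel (indMetric φ) l j i p = christoffel (indMetric φ) l i j p :=
    fun l => Codazzi.christoffel_symm φ l i j p
  simp only [covD]
  rw [Codazzi.pd_sff hU hφ hp i j k, Codazzi.pd_sff hU hφ hp j i k, h3]
  simp only [Fin.sum_univ_two]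
  rw [csymm 0, csymm 1]
  ring
end
end

section
/- Let U ⊆ ℝ² be open, φ : U → ℝ³ a smooth immersion with induced metric g, and let ĵ ∈ ℝ³ be a fixed unit vector. Then the function u = ĵ·φ : U → ℝ satisfies the Darboux equation on U: det(g⁻¹ ∇²u) = (1 − |du|²_g) K, where ∇²u is the covariant Hessian of u with respect to g, |du|²_g = Σ_{i,j} g^{ij} ∂_i u ∂_j u, and K is the Gauss curvature of g. -/
noncomputable section
open Matrix Real

namespace Darboux

def Sm (U : Set Pt) (f : Pt → ℝ) : Prop := ContDiffOn ℝ (⊤ : ℕ∞) f U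

variable {U : Set Pt} {p : Pt} {f g : Pt → ℝ} {i j : Fin 2}

theorem Sm.diffAt (hf : Sm U f) (hU : IsOpen U) (hp : p ∈ U) : DifferentiableAt ℝ f p :=
  ((hf.contDiffAt (hU.mem_nhds hp)).differentiableAt (by norm_num))

theorem Sm.pd (hf : Sm U f) (hU : IsOpen U) (i : Fin 2) : Sm U (pd i f) := by
  have h1 : ContDiffOn ℝ (⊤ : ℕ∞) (fderiv ℝ f) U :=
    hf.fderiv_of_isOpen hU (by exact_mod_cast le_top)
  exact h1.clm_apply contDiffOn_const

theorem Sm.mul (hf : Sm U f) (hg : Sm U g) : Sm U (fun q => f q * g q) :=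
  ContDiffOn.mul hf hg

theorem Sm.sum {ι : Type*} {s : Finset ι} {F : ι → Pt → ℝ} (h : ∀ a ∈ s, Sm U (F a)) :
    Sm U (fun q => ∑ a ∈ s, F a q) := ContDiffOn.sum h

theorem pd_congr_nhds (h : f =ᶠ[nhds p] g) : pd i f p = pd i g p := by
  unfold pd; rw [h.fderiv_eq]

theorem pd_congr (hU : IsOpen U) (h : ∀ q ∈ U, f q = g q) (hp : p ∈ U) :
    pd i f p = pd i g p :=
  pd_congr_nhds (Filter.eventuallyEq_of_mem (hU.mem_nhds hp) h)

theorem pd_add (hf : DifferentiableAt ℝ f p) (hg : DifferentiableAt ℝ g p) :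
    pd i (fun q => f q + g q) p = pd i f p + pd i g p := by
  unfold pd; rw [fderiv_fun_add hf hg]; rfl

theorem pd_mul (hf : DifferentiableAt ℝ f p) (hg : DifferentiableAt ℝ g p) :
    pd i (fun q => f q * g q) p = pd i f p * g p + f p * pd i g p := by
  unfold pd; rw [fderiv_fun_mul hf hg]; simp; ring

theorem pd_const (c : ℝ) : pd i (fun _ => c) p = 0 := by
  unfold pd; simp

theorem pd_const_mul (hf : DifferentiableAt ℝ f p) (c : ℝ) :
    pd i (fun q => c * f q) p = c * pd i f p := by
  unfold pd; rw [fderiv_const_mul hf]; rfl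

theorem pd_sum {ι : Type*} {s : Finset ι} {F : ι → Pt → ℝ}
    (hf : ∀ a ∈ s, DifferentiableAt ℝ (F a) p) :
    pd i (fun q => ∑ a ∈ s, F a q) p = ∑ a ∈ s, pd i (F a) p := by
  unfold pd; rw [fderiv_fun_sum hf]; simp

theorem pd_comm (hU : IsOpen U) (hf : Sm U f) (hp : p ∈ U) (i j : Fin 2) :
    pd i (pd j f) p = pd j (pd i f) p := by
  have hca : ContDiffAt ℝ 2 f p := (hf.contDiffAt (hU.mem_nhds hp)).of_le
    (by norm_cast)
  have hsymm := hca.isSymmSndFDerivAt (by simp)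
  have hd1 : DifferentiableAt ℝ (fderiv ℝ f) p :=
    (hca.fderiv_right (m := 1) (by norm_num)).differentiableAt one_ne_zero
  have key : ∀ k l : Fin 2, pd k (pd l f) p
      = fderiv ℝ (fderiv ℝ f) p (Pi.single k 1) (Pi.single l 1) := by
    intro k l
    unfold pd
    rw [show (fun q => fderiv ℝ f q (Pi.single l 1))
        = fun q => (fderiv ℝ f q) ((fun _ => (Pi.single l 1 : Pt)) q) from rfl]
    rw [fderiv_clm_apply hd1 (differentiableAt_const _)]
    simp
  rw [key i j, key j i, hsymm]

theorem pdV_apply {f : Pt → Vec3} {p : Pt} (hf : DifferentiableAt ℝ f p) (i : Fin 2) (a : Fin 3) :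
    pdV i f p a = pd i (fun q => f q a) p := by
  have h := (((ContinuousLinearMap.proj a : Vec3 →L[ℝ] ℝ)).hasFDerivAt.comp p
    hf.hasFDerivAt).fderiv
  show fderiv ℝ f p (Pi.single i 1) a = fderiv ℝ (fun q => f q a) p (Pi.single i 1)
  calc fderiv ℝ f p (Pi.single i 1) a
      = ((ContinuousLinearMap.proj a : Vec3 →L[ℝ] ℝ).comp (fderiv ℝ f p)) (Pi.single i 1) := rfl
    _ = fderiv ℝ ((ContinuousLinearMap.proj a : Vec3 →L[ℝ] ℝ) ∘ f) p (Pi.single i 1) := by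
        rw [h]
    _ = fderiv ℝ (fun q => f q a) p (Pi.single i 1) := rfl

theorem key_id (x y v w : Vec3) :
    (v ⬝ᵥ crossProduct x y) * (w ⬝ᵥ crossProduct x y)
      = (v ⬝ᵥ w) * ((x ⬝ᵥ x) * (y ⬝ᵥ y) - (x ⬝ᵥ y) * (x ⬝ᵥ y))
        - ((y ⬝ᵥ y) * (v ⬝ᵥ x) * (w ⬝ᵥ x)
           - (x ⬝ᵥ y) * ((v ⬝ᵥ x) * (w ⬝ᵥ y) + (v ⬝ᵥ y) * (w ⬝ᵥ x))
           + (x ⬝ᵥ x) * (v ⬝ᵥ y) * (w ⬝ᵥ y)) := by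
  simp [cross_apply, dotProduct, Fin.sum_univ_three]; ring

theorem lin_dot (c1 c2 : ℝ) (u v z : Vec3) :
    (fun a => c1 * u a - c2 * v a) ⬝ᵥ z = c1 * (u ⬝ᵥ z) - c2 * (v ⬝ᵥ z) := by
  simp [dotProduct, Fin.sum_univ_three]; ring

theorem gram_ne_zero {x y : Vec3} (h : LinearIndependent ℝ ![x, y]) :
    (x ⬝ᵥ x) * (y ⬝ᵥ y) - (x ⬝ᵥ y) * (y ⬝ᵥ x) ≠ 0 := by
  intro hd
  rw [linearIndependent_fin2] at h
  obtain ⟨hy, hxy⟩ := h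
  simp only [Matrix.cons_val_zero, Matrix.cons_val_one, Matrix.head_cons] at hy hxy
  set w : Vec3 := fun a => (y ⬝ᵥ y) * x a - (x ⬝ᵥ y) * y a with hw
  have hcomm := dotProduct_comm x y
  have hwx : w ⬝ᵥ x = 0 := by rw [hw, lin_dot]; rw [dotProduct_comm y x] at hd ⊢; linarith
  have hwy : w ⬝ᵥ y = 0 := by rw [hw, lin_dot]; ring
  have hww : w ⬝ᵥ w = 0 := by
    rw [hw, lin_dot, dotProduct_comm x w, dotProduct_comm y w, hw, lin_dot, lin_dot]
    rw [dotProduct_comm y x] at hd ⊢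
    linear_combination (y ⬝ᵥ y) * hd
  have hw0 : w = 0 := dotProduct_self_eq_zero.mp hww
  by_cases hyy : y ⬝ᵥ y = 0
  · exact hy (dotProduct_self_eq_zero.mp hyy)
  · apply hxy ((x ⬝ᵥ y) / (y ⬝ᵥ y))
    funext a
    have h2 := congrFun hw0 a
    simp only [hw, Pi.zero_apply] at h2
    simp only [Pi.smul_apply, smul_eq_mul]
    rw [div_mul_eq_mul_div, div_eq_iff hyy]
    linarith

/-! ### Geometric auxiliary functions -/

variable (φ : Pt → Vec3)

def C (a : Fin 3) : Pt → ℝ := fun q => φ q a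
def X (i : Fin 2) (a : Fin 3) : Pt → ℝ := pd i (C φ a)
def G (i j : Fin 2) : Pt → ℝ := fun q => ∑ a, X φ i a q * X φ j a q
def DG : Pt → ℝ := fun q => G φ 0 0 q * G φ 1 1 q - G φ 0 1 q * G φ 1 0 q
def SX (l i j : Fin 2) : Pt → ℝ := fun q => ∑ a, pd i (pd j (C φ a)) q * X φ l a q
def AdjF (k l : Fin 2) : Pt → ℝ :=
  if k = 0 then (if l = 0 then G φ 1 1 else fun q => -G φ 0 1 q)
  else (if l = 0 then fun q => -G φ 1 0 q else G φ 0 0)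
def Gam (k i j : Fin 2) : Pt → ℝ :=
  fun q => (DG φ q)⁻¹ * (AdjF φ k 0 q * SX φ 0 i j q + AdjF φ k 1 q * SX φ 1 i j q)

variable {φ}
variable (hU : IsOpen U) (hφ : IsImmersionOn φ U)
include hU hφ

section
theorem smC (a : Fin 3) : Sm U (C φ a) :=
  (ContinuousLinearMap.proj a (R := ℝ) (φ := fun _ : Fin 3 => ℝ)).contDiff.comp_contDiffOn hφ.1

theorem smX (i : Fin 2) (a : Fin 3) : Sm U (X φ i a) := (smC hU hφ a).pd hU i

theorem smG (i j : Fin 2) : Sm U (G φ i j) :=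
  Sm.sum fun a _ => (smX hU hφ i a).mul (smX hU hφ j a)

theorem smDG : Sm U (DG φ) :=
  (((smG hU hφ 0 0).mul (smG hU hφ 1 1)).sub ((smG hU hφ 0 1).mul (smG hU hφ 1 0)))

theorem smSX (l i j : Fin 2) : Sm U (SX φ l i j) :=
  Sm.sum fun a _ => (((smC hU hφ a).pd hU j).pd hU i).mul (smX hU hφ l a)

theorem smAdjF (k l : Fin 2) : Sm U (AdjF φ k l) := by
  unfold AdjF
  fin_cases k <;> fin_cases l <;> simp <;>
    first
      | exact smG hU hφ _ _
      | exact (smG hU hφ _ _).neg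

/-- components of `pdV` -/
theorem pdV_eq (hq : p ∈ U) (i : Fin 2) (a : Fin 3) : pdV i φ p a = X φ i a p :=
  pdV_apply ((hφ.1.contDiffAt (hU.mem_nhds hq)).differentiableAt (by norm_num)) i a

theorem G_eq (hq : p ∈ U) (i j : Fin 2) : indMetric φ p i j = G φ i j p := by
  show pdV i φ p ⬝ᵥ pdV j φ p = _
  unfold dotProduct G
  exact Finset.sum_congr rfl fun a _ => by rw [pdV_eq hU hφ hq, pdV_eq hU hφ hq]

theorem DG_ne (hq : p ∈ U) : DG φ p ≠ 0 := by
  have h1 : ∀ i : Fin 2, pdV i φ p = fun a => X φ i a p := by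
    intro i; funext a; exact pdV_eq hU hφ hq i a
  have h2 := gram_ne_zero (x := fun a => X φ 0 a p) (y := fun a => X φ 1 a p) ?_
  · show G φ 0 0 p * G φ 1 1 p - G φ 0 1 p * G φ 1 0 p ≠ 0
    convert h2 using 2 <;> simp [G, dotProduct]
  · have := hφ.2 p hq
    rwa [h1 0, h1 1] at this

theorem det_eq (hq : p ∈ U) : (indMetric φ p).det = DG φ p := by
  rw [Matrix.det_fin_two]
  show indMetric φ p 0 0 * indMetric φ p 1 1 - indMetric φ p 0 1 * indMetric φ p 1 0 = _
  rw [G_eq hU hφ hq, G_eq hU hφ hq, G_eq hU hφ hq, G_eq hU hφ hq]; rfl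

theorem inv_eq (hq : p ∈ U) (k l : Fin 2) :
    (indMetric φ p)⁻¹ k l = (DG φ p)⁻¹ * AdjF φ k l p := by
  rw [Matrix.inv_def, Matrix.adjugate_fin_two]
  have hd := det_eq hU hφ hq
  have : Ring.inverse (indMetric φ p).det = (DG φ p)⁻¹ := by
    rw [Ring.inverse_eq_inv', hd]
  rw [Matrix.smul_apply, this, smul_eq_mul]
  congr 1
  fin_cases k <;> fin_cases l <;>
    simp [AdjF, G_eq hU hφ hq]

/-- product rule for the metric entries -/
theorem pdG (hq : p ∈ U) (k i j : Fin 2) :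
    pd k (G φ i j) p = SX φ j k i p + SX φ i k j p := by
  unfold G SX
  rw [pd_sum (fun a _ => ((smX hU hφ i a).diffAt hU hq).fun_mul ((smX hU hφ j a).diffAt hU hq))]
  rw [← Finset.sum_add_distrib]
  refine Finset.sum_congr rfl fun a _ => ?_
  rw [pd_mul ((smX hU hφ i a).diffAt hU hq) ((smX hU hφ j a).diffAt hU hq)]
  show pd k (pd i (C φ a)) p * X φ j a p + X φ i a p * pd k (pd j (C φ a)) p = _
  rw [pd_comm hU (smC hU hφ a) hq k i, pd_comm hU (smC hU hφ a) hq k j]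
  ring

theorem SX_symm (hq : p ∈ U) (l i j : Fin 2) : SX φ l i j p = SX φ l j i p := by
  unfold SX
  exact Finset.sum_congr rfl fun a _ => by rw [pd_comm hU (smC hU hφ a) hq i j]

/-- Christoffel symbols of the first kind -/
theorem chr1 (hq : p ∈ U) (l i j : Fin 2) :
    (1/2) * (pd i (G φ j l) p + pd j (G φ i l) p - pd l (G φ i j) p) = SX φ l i j p := by
  rw [pdG hU hφ hq, pdG hU hφ hq, pdG hU hφ hq,
    SX_symm hU hφ hq l i j, SX_symm hU hφ hq j i l, SX_symm hU hφ hq i j l]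
  ring

/-- identification of the Christoffel symbols -/
theorem chr_eq (hq : p ∈ U) (k i j : Fin 2) :
    christoffel (indMetric φ) k i j p = Gam φ k i j p := by
  unfold christoffel
  have hpd : ∀ (m : Fin 2) (i' j' : Fin 2), pd m (fun q => indMetric φ q i' j') p
      = pd m (G φ i' j') p :=
    fun m i' j' => pd_congr hU (fun q hq' => G_eq hU hφ hq' i' j') hq
  rw [Fin.sum_univ_two]
  rw [hpd i j 0, hpd j i 0, hpd 0 i j, hpd i j 1, hpd j i 1, hpd 1 i j]
  rw [inv_eq hU hφ hq k 0, inv_eq hU hφ hq k 1]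
  have h0 := chr1 hU hφ hq 0 i j
  have h1 := chr1 hU hφ hq 1 i j
  unfold Gam
  linear_combination (DG φ p)⁻¹ * AdjF φ k 0 p * h0 + (DG φ p)⁻¹ * AdjF φ k 1 p * h1

theorem diffGam (hq : p ∈ U) (k i j : Fin 2) : DifferentiableAt ℝ (Gam φ k i j) p := by
  unfold Gam
  exact (((smDG hU hφ).diffAt hU hq).inv (DG_ne hU hφ hq)).mul
    ((((smAdjF hU hφ k 0).diffAt hU hq).mul ((smSX hU hφ 0 i j).diffAt hU hq)).add
     (((smAdjF hU hφ k 1).diffAt hU hq).mul ((smSX hU hφ 1 i j).diffAt hU hq)))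

/-- lowering: `∑ m, g 0 m * Γ^m_{jk} = SX 0 j k` -/
theorem lower (hq : p ∈ U) (j k : Fin 2) :
    ∑ m, G φ 0 m p * Gam φ m j k p = SX φ 0 j k p := by
  rw [Fin.sum_univ_two]
  unfold Gam AdjF
  simp only [one_ne_zero, if_true, if_false, reduceIte, Fin.isValue]
  have hd := DG_ne hU hφ hq
  have hDG : DG φ p = G φ 0 0 p * G φ 1 1 p - G φ 0 1 p * G φ 1 0 p := rfl
  have hsym : G φ 1 0 p = G φ 0 1 p := by
    unfold G; exact Finset.sum_congr rfl fun a _ => mul_comm _ _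
  field_simp
  linear_combination (-(SX φ 0 j k p)) * hDG


theorem pd_SX (hq : p ∈ U) (i l j k : Fin 2) :
    pd i (SX φ l j k) p = (∑ a, pd i (pd j (pd k (C φ a))) p * X φ l a p)
      + ∑ a, pd j (pd k (C φ a)) p * pd i (pd l (C φ a)) p := by
  unfold SX
  rw [pd_sum (fun a _ => ((((smC hU hφ a).pd hU k).pd hU j).diffAt hU hq).fun_mul
    ((smX hU hφ l a).diffAt hU hq))]
  rw [← Finset.sum_add_distrib]
  refine Finset.sum_congr rfl fun a _ => ?_
  rw [pd_mul ((((smC hU hφ a).pd hU k).pd hU j).diffAt hU hq) ((smX hU hφ l a).diffAt hU hq)]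
  rfl

/-- third derivative symmetry used to cancel `T`-terms -/
theorem tsymm (hq : p ∈ U) (a : Fin 3) :
    pd 1 (pd 1 (pd 0 (C φ a))) p = pd 0 (pd 1 (pd 1 (C φ a))) p := by
  have h1 : pd 1 (pd 1 (pd 0 (C φ a))) p = pd 1 (pd 0 (pd 1 (C φ a))) p :=
    pd_congr hU (fun q hq' => pd_comm hU (smC hU hφ a) hq' 1 0) hq
  rw [h1]
  exact pd_comm hU ((smC hU hφ a).pd hU 1) hq 1 0

/-- key rearrangement: `∑ m g₀ₘ ∂ᵢΓ^m_{jk} = ∂ᵢ(SX 0 j k) - ∑ m ∂ᵢ g₀ₘ Γ^m_{jk}` -/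
theorem sum_lower_pd (hq : p ∈ U) (i j k : Fin 2) :
    ∑ m, G φ 0 m p * pd i (christoffel (indMetric φ) m j k) p
      = pd i (SX φ 0 j k) p - ∑ m, pd i (G φ 0 m) p * Gam φ m j k p := by
  have h1 : ∀ m : Fin 2, pd i (christoffel (indMetric φ) m j k) p = pd i (Gam φ m j k) p :=
    fun m => pd_congr hU (fun q hq' => chr_eq hU hφ hq' m j k) hq
  have h2 : pd i (SX φ 0 j k) p = pd i (fun q => ∑ m, G φ 0 m q * Gam φ m j k q) p :=
    pd_congr hU (fun q hq' => (lower hU hφ hq' j k).symm) hq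
  rw [h2, pd_sum (fun m _ => ((smG hU hφ 0 m).diffAt hU hq).fun_mul (diffGam hU hφ hq m j k))]
  have h3 : ∀ m : Fin 2, pd i (fun q => G φ 0 m q * Gam φ m j k q) p
      = pd i (G φ 0 m) p * Gam φ m j k p + G φ 0 m p * pd i (Gam φ m j k) p :=
    fun m => pd_mul ((smG hU hφ 0 m).diffAt hU hq) (diffGam hU hφ hq m j k)
  rw [Fin.sum_univ_two, Fin.sum_univ_two, Fin.sum_univ_two, h1 0, h1 1, h3 0, h3 1]
  ring

theorem Gsymm (hq : p ∈ U) (i j : Fin 2) : G φ i j p = G φ j i p := by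
  unfold G; exact Finset.sum_congr rfl fun a _ => mul_comm _ _


/-- reduced form of the curvature numerator -/
theorem R_red (hq : p ∈ U) : R1212 (indMetric φ) p
    = (∑ a, pd 1 (pd 1 (C φ a)) p * pd 0 (pd 0 (C φ a)) p)
      - (∑ a, pd 0 (pd 1 (C φ a)) p * pd 0 (pd 1 (C φ a)) p)
      - (SX φ 0 0 0 p * Gam φ 0 1 1 p + SX φ 1 0 0 p * Gam φ 1 1 1 p)
      + (SX φ 0 0 1 p * Gam φ 0 1 0 p + SX φ 1 0 1 p * Gam φ 1 1 0 p) := by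
  have e1 := sum_lower_pd hU hφ hq 0 1 1
  have e2 := sum_lower_pd hU hφ hq 1 1 0
  have e30 := lower hU hφ hq 0 0
  have e31 := lower hU hφ hq 0 1
  have e40 := lower hU hφ hq 1 0
  have e41 := lower hU hφ hq 1 1
  have e5 := pd_SX hU hφ hq 0 0 1 1
  have e6 := pd_SX hU hφ hq 1 0 1 0
  have e7 : (∑ a, pd 0 (pd 1 (pd 1 (C φ a))) p * X φ 0 a p)
      = ∑ a, pd 1 (pd 1 (pd 0 (C φ a))) p * X φ 0 a p :=
    Finset.sum_congr rfl fun a _ => by rw [tsymm hU hφ hq a]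
  have e8 : (∑ a, pd 1 (pd 0 (C φ a)) p * pd 1 (pd 0 (C φ a)) p)
      = ∑ a, pd 0 (pd 1 (C φ a)) p * pd 0 (pd 1 (C φ a)) p :=
    Finset.sum_congr rfl fun a _ => by rw [pd_comm hU (smC hU hφ a) hq 1 0]
  have e90 := pdG hU hφ hq 0 0 0
  have e91 := pdG hU hφ hq 0 0 1
  have e92 := pdG hU hφ hq 1 0 0
  have e93 := pdG hU hφ hq 1 0 1
  have es0 := SX_symm hU hφ hq 0 1 0
  have es1 := SX_symm hU hφ hq 1 1 0
  unfold R1212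
  simp only [Fin.sum_univ_two]
  rw [show indMetric φ p 0 0 = G φ 0 0 p from G_eq hU hφ hq 0 0,
      show indMetric φ p 0 1 = G φ 0 1 p from G_eq hU hφ hq 0 1]
  simp only [chr_eq hU hφ hq]
  simp only [Fin.sum_univ_two] at e1 e2 e30 e31 e40 e41
  linear_combination e1 - e2 + e5 - e6 + e7 - e8
    + Gam φ 0 1 1 p * e30 + Gam φ 1 1 1 p * e31
    - Gam φ 0 1 0 p * e40 - Gam φ 1 1 0 p * e41
    - Gam φ 0 1 1 p * e90 - Gam φ 1 1 1 p * e91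
    + Gam φ 0 1 0 p * e92 + Gam φ 1 1 0 p * e93
    + (Gam φ 0 1 0 p) * es0 + (Gam φ 1 1 0 p) * es1


omit hU hφ in
theorem AdjF00 : AdjF φ 0 0 = G φ 1 1 := by unfold AdjF; simp
omit hU hφ in
theorem AdjF01 : AdjF φ 0 1 = fun q => -G φ 0 1 q := by unfold AdjF; simp
omit hU hφ in
theorem AdjF10 : AdjF φ 1 0 = fun q => -G φ 1 0 q := by unfold AdjF; simp
omit hU hφ in
theorem AdjF11 : AdjF φ 1 1 = G φ 0 0 := by unfold AdjF; simp

theorem Gam0_mul (hq : p ∈ U) (i j : Fin 2) :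
    DG φ p * Gam φ 0 i j p = G φ 1 1 p * SX φ 0 i j p - G φ 0 1 p * SX φ 1 i j p := by
  unfold Gam
  rw [← mul_assoc, mul_inv_cancel₀ (DG_ne hU hφ hq), one_mul, AdjF00 (φ := φ),
    AdjF01 (φ := φ)]
  beta_reduce
  ring

theorem Gam1_mul (hq : p ∈ U) (i j : Fin 2) :
    DG φ p * Gam φ 1 i j p = -(G φ 0 1 p) * SX φ 0 i j p + G φ 0 0 p * SX φ 1 i j p := by
  unfold Gam
  rw [← mul_assoc, mul_inv_cancel₀ (DG_ne hU hφ hq), one_mul, AdjF10 (φ := φ),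
    AdjF11 (φ := φ)]
  beta_reduce
  rw [Gsymm hU hφ hq 1 0]
  try ring

theorem R_val (hq : p ∈ U) :
    R1212 (indMetric φ) p * DG φ p
      = ((fun a => pd 0 (pd 0 (C φ a)) p)
            ⬝ᵥ crossProduct (fun a => X φ 0 a p) (fun a => X φ 1 a p))
        * ((fun a => pd 1 (pd 1 (C φ a)) p)
            ⬝ᵥ crossProduct (fun a => X φ 0 a p) (fun a => X φ 1 a p))
      - ((fun a => pd 0 (pd 1 (C φ a)) p)
            ⬝ᵥ crossProduct (fun a => X φ 0 a p) (fun a => X φ 1 a p))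
        * ((fun a => pd 0 (pd 1 (C φ a)) p)
            ⬝ᵥ crossProduct (fun a => X φ 0 a p) (fun a => X φ 1 a p)) := by
  have k1 := key_id (fun a => X φ 0 a p) (fun a => X φ 1 a p)
    (fun a => pd 0 (pd 0 (C φ a)) p) (fun a => pd 1 (pd 1 (C φ a)) p)
  have k2 := key_id (fun a => X φ 0 a p) (fun a => X φ 1 a p)
    (fun a => pd 0 (pd 1 (C φ a)) p) (fun a => pd 0 (pd 1 (C φ a)) p)
  have q1 : (∑ a, pd 1 (pd 1 (C φ a)) p * pd 0 (pd 0 (C φ a)) p)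
      = (fun a => pd 0 (pd 0 (C φ a)) p) ⬝ᵥ (fun a => pd 1 (pd 1 (C φ a)) p) :=
    Finset.sum_congr rfl fun a _ => mul_comm _ _
  have q2 : (∑ a, pd 0 (pd 1 (C φ a)) p * pd 0 (pd 1 (C φ a)) p)
      = (fun a => pd 0 (pd 1 (C φ a)) p) ⬝ᵥ (fun a => pd 0 (pd 1 (C φ a)) p) := rfl
  have hSXd : ∀ l i j : Fin 2, SX φ l i j p
      = (fun a => pd i (pd j (C φ a)) p) ⬝ᵥ (fun a => X φ l a p) := fun _ _ _ => rfl
  have hswap10 : (fun a => pd 1 (pd 0 (C φ a)) p) = (fun a => pd 0 (pd 1 (C φ a)) p) :=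
    funext fun a => pd_comm hU (smC hU hφ a) hq 1 0
  have hGd : ∀ i j : Fin 2, G φ i j p
      = (fun a => X φ i a p) ⬝ᵥ (fun a => X φ j a p) := fun _ _ => rfl
  have hx10 : (fun a => X φ 1 a p) ⬝ᵥ (fun a => X φ 0 a p)
      = (fun a => X φ 0 a p) ⬝ᵥ (fun a => X φ 1 a p) := dotProduct_comm _ _
  have hDGd : DG φ p = ((fun a => X φ 0 a p) ⬝ᵥ (fun a => X φ 0 a p))
      * ((fun a => X φ 1 a p) ⬝ᵥ (fun a => X φ 1 a p))
      - ((fun a => X φ 0 a p) ⬝ᵥ (fun a => X φ 1 a p))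
      * ((fun a => X φ 0 a p) ⬝ᵥ (fun a => X φ 1 a p)) := by
    show G φ 0 0 p * G φ 1 1 p - G φ 0 1 p * G φ 1 0 p = _
    rw [hGd, hGd, hGd, hGd, hx10]
  have g011 := Gam0_mul hU hφ hq 1 1
  have g111 := Gam1_mul hU hφ hq 1 1
  have g010 := Gam0_mul hU hφ hq 1 0
  have g110 := Gam1_mul hU hφ hq 1 0
  simp only [hSXd, hGd, hswap10, hDGd] at g011 g111 g010 g110
  rw [R_red hU hφ hq]
  simp only [hSXd, hGd, hswap10, hDGd, q1, q2]
  linear_combination (-1 : ℝ) * k1 + k2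
    - ((fun a => pd 0 (pd 0 (C φ a)) p) ⬝ᵥ (fun a => X φ 0 a p)) * g011
    - ((fun a => pd 0 (pd 0 (C φ a)) p) ⬝ᵥ (fun a => X φ 1 a p)) * g111
    + ((fun a => pd 0 (pd 1 (C φ a)) p) ⬝ᵥ (fun a => X φ 0 a p)) * g010
    + ((fun a => pd 0 (pd 1 (C φ a)) p) ⬝ᵥ (fun a => X φ 1 a p)) * g110


theorem pdu (hq : p ∈ U) (jhat : Vec3) (k : Fin 2) :
    pd k (fun q => jhat ⬝ᵥ φ q) p = ∑ a, jhat a * X φ k a p := by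
  rw [show (fun q => jhat ⬝ᵥ φ q) = (fun q => ∑ a, jhat a * C φ a q) from rfl]
  rw [pd_sum (fun a _ => ((smC hU hφ a).diffAt hU hq).const_mul _)]
  exact Finset.sum_congr rfl fun a _ => pd_const_mul ((smC hU hφ a).diffAt hU hq) _

theorem pddu (hq : p ∈ U) (jhat : Vec3) (i j : Fin 2) :
    pd i (pd j (fun q => jhat ⬝ᵥ φ q)) p = ∑ a, jhat a * pd i (pd j (C φ a)) p := by
  have h1 : pd i (pd j (fun q => jhat ⬝ᵥ φ q)) p
      = pd i (fun q => ∑ a, jhat a * X φ j a q) p :=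
    pd_congr hU (fun q hq' => pdu hU hφ hq' jhat j) hq
  rw [h1, pd_sum (fun a _ => ((smX hU hφ j a).diffAt hU hq).const_mul _)]
  exact Finset.sum_congr rfl fun a _ => pd_const_mul ((smX hU hφ j a).diffAt hU hq) _

theorem hess_val (hq : p ∈ U) (jhat : Vec3) (i j : Fin 2) :
    hess (indMetric φ) (fun q => jhat ⬝ᵥ φ q) i j p * DG φ p
      = (jhat ⬝ᵥ crossProduct (fun a => X φ 0 a p) (fun a => X φ 1 a p)) * ((fun a => pd i (pd j (C φ a)) p) ⬝ᵥ crossProduct (fun a => X φ 0 a p) (fun a => X φ 1 a p)) := by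
  have hSXd : ∀ l i j : Fin 2, SX φ l i j p
      = (fun a => pd i (pd j (C φ a)) p) ⬝ᵥ (fun a => X φ l a p) := fun _ _ _ => rfl
  have hGd : ∀ i j : Fin 2, G φ i j p
      = (fun a => X φ i a p) ⬝ᵥ (fun a => X φ j a p) := fun _ _ => rfl
  have hx10 : (fun a => X φ 1 a p) ⬝ᵥ (fun a => X φ 0 a p)
      = (fun a => X φ 0 a p) ⬝ᵥ (fun a => X φ 1 a p) := dotProduct_comm _ _
  have hDGd : DG φ p = ((fun a => X φ 0 a p) ⬝ᵥ (fun a => X φ 0 a p))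
      * ((fun a => X φ 1 a p) ⬝ᵥ (fun a => X φ 1 a p))
      - ((fun a => X φ 0 a p) ⬝ᵥ (fun a => X φ 1 a p))
      * ((fun a => X φ 0 a p) ⬝ᵥ (fun a => X φ 1 a p)) := by
    show G φ 0 0 p * G φ 1 1 p - G φ 0 1 p * G φ 1 0 p = _
    rw [hGd, hGd, hGd, hGd, hx10]
  have g0 := Gam0_mul hU hφ hq i j
  have g1 := Gam1_mul hU hφ hq i j
  have kk := key_id (fun a => X φ 0 a p) (fun a => X φ 1 a p) jhat
    (fun a => pd i (pd j (C φ a)) p)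
  have hdd := pddu hU hφ hq jhat i j
  have hpu : ∀ k : Fin 2, pd k (fun q => jhat ⬝ᵥ φ q) p
      = jhat ⬝ᵥ (fun a => X φ k a p) := fun k => pdu hU hφ hq jhat k
  have c1 : (∑ a, jhat a * pd i (pd j (C φ a)) p)
      = jhat ⬝ᵥ (fun a => pd i (pd j (C φ a)) p) := rfl
  simp only [hSXd, hGd] at g0 g1
  unfold hess
  rw [Fin.sum_univ_two, chr_eq hU hφ hq 0 i j, chr_eq hU hφ hq 1 i j, hdd, c1,
    hpu 0, hpu 1]
  linear_combination (-(jhat ⬝ᵥ (fun a => X φ 0 a p))) * g0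
    - (jhat ⬝ᵥ (fun a => X φ 1 a p)) * g1 - kk
    + (jhat ⬝ᵥ (fun a => pd i (pd j (C φ a)) p)) * hDGd

theorem gradSq_val (hq : p ∈ U) (jhat : Vec3) (hj : jhat ⬝ᵥ jhat = 1) :
    (1 - gradSq (indMetric φ) (fun q => jhat ⬝ᵥ φ q) p) * DG φ p
      = (jhat ⬝ᵥ crossProduct (fun a => X φ 0 a p) (fun a => X φ 1 a p)) * (jhat ⬝ᵥ crossProduct (fun a => X φ 0 a p) (fun a => X φ 1 a p)) := by
  have hGd : ∀ i j : Fin 2, G φ i j p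
      = (fun a => X φ i a p) ⬝ᵥ (fun a => X φ j a p) := fun _ _ => rfl
  have hx10 : (fun a => X φ 1 a p) ⬝ᵥ (fun a => X φ 0 a p)
      = (fun a => X φ 0 a p) ⬝ᵥ (fun a => X φ 1 a p) := dotProduct_comm _ _
  have hDGd : DG φ p = ((fun a => X φ 0 a p) ⬝ᵥ (fun a => X φ 0 a p))
      * ((fun a => X φ 1 a p) ⬝ᵥ (fun a => X φ 1 a p))
      - ((fun a => X φ 0 a p) ⬝ᵥ (fun a => X φ 1 a p))
      * ((fun a => X φ 0 a p) ⬝ᵥ (fun a => X φ 1 a p)) := by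
    show G φ 0 0 p * G φ 1 1 p - G φ 0 1 p * G φ 1 0 p = _
    rw [hGd, hGd, hGd, hGd, hx10]
  have hinv : DG φ p * (DG φ p)⁻¹ = 1 := mul_inv_cancel₀ (DG_ne hU hφ hq)
  have kk := key_id (fun a => X φ 0 a p) (fun a => X φ 1 a p) jhat jhat
  have hpu : ∀ k : Fin 2, pd k (fun q => jhat ⬝ᵥ φ q) p
      = jhat ⬝ᵥ (fun a => X φ k a p) := fun k => pdu hU hφ hq jhat k
  unfold gradSq
  rw [Fin.sum_univ_two, Fin.sum_univ_two, Fin.sum_univ_two]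
  rw [inv_eq hU hφ hq 0 0, inv_eq hU hφ hq 0 1, inv_eq hU hφ hq 1 0, inv_eq hU hφ hq 1 1,
    AdjF00 (φ := φ), AdjF01 (φ := φ), AdjF10 (φ := φ), AdjF11 (φ := φ)]
  beta_reduce
  rw [Gsymm hU hφ hq 1 0, hpu 0, hpu 1]
  simp only [hGd]
  set J0 := jhat ⬝ᵥ (fun a => X φ 0 a p) with hJ0
  set J1 := jhat ⬝ᵥ (fun a => X φ 1 a p) with hJ1
  linear_combination (-1 : ℝ) * kk
    - (((fun a => X φ 1 a p) ⬝ᵥ (fun a => X φ 1 a p)) * J0 * J0 - ((fun a => X φ 0 a p) ⬝ᵥ (fun a => X φ 1 a p)) * J0 * J1 - ((fun a => X φ 0 a p) ⬝ᵥ (fun a => X φ 1 a p)) * J1 * J0 + ((fun a => X φ 0 a p) ⬝ᵥ (fun a => X φ 0 a p)) * J1 * J1) * hinv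
    + hDGd - (((fun a => X φ 0 a p) ⬝ᵥ (fun a => X φ 0 a p)) * ((fun a => X φ 1 a p) ⬝ᵥ (fun a => X φ 1 a p)) - ((fun a => X φ 0 a p) ⬝ᵥ (fun a => X φ 1 a p)) * ((fun a => X φ 0 a p) ⬝ᵥ (fun a => X φ 1 a p))) * hj

end

omit hU hφ in
theorem main (hU : IsOpen U) (hφ : IsImmersionOn φ U)
    (jhat : Vec3) (hjhat : jhat ⬝ᵥ jhat = 1) (hp : p ∈ U) :
    ((indMetric φ p)⁻¹ *
        Matrix.of (fun i j => hess (indMetric φ) (fun q => jhat ⬝ᵥ φ q) i j p)).det =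
      (1 - gradSq (indMetric φ) (fun q => jhat ⬝ᵥ φ q) p) * gaussK (indMetric φ) p := by
  have hd := DG_ne hU hφ hp
  have hinv := mul_inv_cancel₀ hd
  have e2 := gradSq_val hU hφ hp jhat hjhat
  have e3 := R_val hU hφ hp
  have h00 := hess_val hU hφ hp jhat 0 0
  have h01 := hess_val hU hφ hp jhat 0 1
  have h10 := hess_val hU hφ hp jhat 1 0
  have h11 := hess_val hU hφ hp jhat 1 1
  have hswap10 : (fun a => pd 1 (pd 0 (C φ a)) p) = (fun a => pd 0 (pd 1 (C φ a)) p) :=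
    funext fun a => pd_comm hU (smC hU hφ a) hp 1 0
  rw [hswap10] at h10
  rw [Matrix.det_mul, Matrix.det_nonsing_inv, Ring.inverse_eq_inv', det_eq hU hφ hp,
    Matrix.det_fin_two]
  simp only [Matrix.of_apply]
  unfold gaussK
  rw [det_eq hU hφ hp, div_eq_mul_inv]
  refine mul_right_cancel₀ (pow_ne_zero 3 hd) ?_
  linear_combination
    ((DG φ p)^2 * ((hess (indMetric φ) (fun q => jhat ⬝ᵥ φ q) 0 0 p) * (hess (indMetric φ) (fun q => jhat ⬝ᵥ φ q) 1 1 p) - (hess (indMetric φ) (fun q => jhat ⬝ᵥ φ q) 0 1 p) * (hess (indMetric φ) (fun q => jhat ⬝ᵥ φ q) 1 0 p))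
      - (1 - (gradSq (indMetric φ) (fun q => jhat ⬝ᵥ φ q) p)) * (R1212 (indMetric φ) p) * (DG φ p)^2) * hinv
    + ((DG φ p) * (hess (indMetric φ) (fun q => jhat ⬝ᵥ φ q) 1 1 p)) * h00 + ((jhat ⬝ᵥ crossProduct (fun a => X φ 0 a p) (fun a => X φ 1 a p)) * ((fun a => pd 0 (pd 0 (C φ a)) p) ⬝ᵥ crossProduct (fun a => X φ 0 a p) (fun a => X φ 1 a p))) * h11
    - ((DG φ p) * (hess (indMetric φ) (fun q => jhat ⬝ᵥ φ q) 1 0 p)) * h01 - ((jhat ⬝ᵥ crossProduct (fun a => X φ 0 a p) (fun a => X φ 1 a p)) * ((fun a => pd 0 (pd 1 (C φ a)) p) ⬝ᵥ crossProduct (fun a => X φ 0 a p) (fun a => X φ 1 a p))) * h10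
    - ((R1212 (indMetric φ) p) * (DG φ p)) * e2 - ((jhat ⬝ᵥ crossProduct (fun a => X φ 0 a p) (fun a => X φ 1 a p)) * (jhat ⬝ᵥ crossProduct (fun a => X φ 0 a p) (fun a => X φ 1 a p))) * e3

end Darboux

/-- **The Darboux equation.** For a smooth immersion `φ : U → ℝ³` with induced metric `g`
and a fixed unit vector `ĵ`, the height function `u = ĵ·φ` satisfies
`det(g⁻¹ ∇²u) = (1 − |du|²_g) K`, where `K` is the Gauss curvature of `g`. -/
theorem height_function_satisfies_darboux
    (U : Set Pt) (hU : IsOpen U)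
    (φ : Pt → Vec3) (hφ : IsImmersionOn φ U)
    (jhat : Vec3) (hjhat : jhat ⬝ᵥ jhat = 1) :
    ∀ p ∈ U,
      ((indMetric φ p)⁻¹ *
          Matrix.of (fun i j => hess (indMetric φ) (fun q => jhat ⬝ᵥ φ q) i j p)).det =
        (1 - gradSq (indMetric φ) (fun q => jhat ⬝ᵥ φ q) p) * gaussK (indMetric φ) p := by
  intro p hp
  exact Darboux.main hU hφ jhat hjhat hp
end
end

section
/- On U = {(x,y) ∈ ℝ² : x > 0}, the metric g₁ given by the matrix G₁(x,y) = diag(cosh⁴x, sinh²x) (i.e., g₁ = (cosh⁴x)dx² + (sinh²x)dy²) has Gauss curvature K = 1/cosh⁴x > 0, and the function k := √K = 1/cosh²x satisfies the tensor equation (∇²k)_{ij} = (5/(2k)) ∂_i k ∂_j k − 2k³ (g₁)_{ij} on U. -/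
noncomputable section
open Matrix Real

/-- The model metric `g₁ = cosh⁴x dx² + sinh²x dy²` on the half-plane `x > 0`. -/
def modelG : Pt → Matrix (Fin 2) (Fin 2) ℝ :=
  fun q => !![Real.cosh (q 0) ^ 4, 0; 0, Real.sinh (q 0) ^ 2]

/-- The candidate square root of the (absolute) Gauss curvature. -/
def modelk : Pt → ℝ :=
  fun q => 1 / Real.cosh (q 0) ^ 2

lemma hasFDerivAt_comp0 {h : ℝ → ℝ} {a : ℝ} (p : Pt) (hd : HasDerivAt h a (p 0)) :
    HasFDerivAt (fun q : Pt => h (q 0)) (a • (ContinuousLinearMap.proj 0 : Pt →L[ℝ] ℝ)) p :=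
  hd.comp_hasFDerivAt p ((ContinuousLinearMap.proj (R := ℝ) (φ := fun _ : Fin 2 => ℝ) 0).hasFDerivAt)

lemma pd0_comp {h : ℝ → ℝ} {a : ℝ} (p : Pt) (hd : HasDerivAt h a (p 0)) :
    pd 0 (fun q => h (q 0)) p = a := by
  unfold pd; rw [(hasFDerivAt_comp0 p hd).fderiv]; simp

lemma pd1_comp {h : ℝ → ℝ} {a : ℝ} (p : Pt) (hd : HasDerivAt h a (p 0)) :
    pd 1 (fun q => h (q 0)) p = 0 := by
  unfold pd; rw [(hasFDerivAt_comp0 p hd).fderiv]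
  simp [Pi.single_eq_of_ne]

lemma pd_const (i : Fin 2) (c : ℝ) (p : Pt) : pd i (fun _ => c) p = 0 := by
  unfold pd; rw [fderiv_fun_const]; simp

lemma modelG_inv (p : Pt) (hs : Real.sinh (p 0) ≠ 0) :
    (modelG p)⁻¹ = !![(Real.cosh (p 0)^4)⁻¹, 0; 0, (Real.sinh (p 0)^2)⁻¹] := by
  have hc : Real.cosh (p 0) ≠ 0 := (Real.cosh_pos _).ne'
  apply Matrix.inv_eq_right_inv
  rw [modelG, Matrix.mul_fin_two]
  norm_num [mul_inv_cancel₀, pow_ne_zero, hc, hs]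
  exact Matrix.one_fin_two.symm

-- metric entry pd lemmas
lemma pdG000 (p : Pt) : pd 0 (fun q => modelG q 0 0) p = 4*Real.cosh (p 0)^3*Real.sinh (p 0) := by
  have : (fun q : Pt => modelG q 0 0) = fun q => Real.cosh (q 0)^4 := by
    funext q; simp [modelG]
  rw [this, pd0_comp p ((Real.hasDerivAt_cosh (p 0)).fun_pow 4)]
  norm_num

lemma pdG100 (p : Pt) : pd 1 (fun q => modelG q 0 0) p = 0 := by
  have : (fun q : Pt => modelG q 0 0) = fun q => Real.cosh (q 0)^4 := by
    funext q; simp [modelG]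
  rw [this, pd1_comp p ((Real.hasDerivAt_cosh (p 0)).fun_pow 4)]

lemma pdG011 (p : Pt) : pd 0 (fun q => modelG q 1 1) p = 2*Real.sinh (p 0)*Real.cosh (p 0) := by
  have : (fun q : Pt => modelG q 1 1) = fun q => Real.sinh (q 0)^2 := by
    funext q; simp [modelG]
  rw [this, pd0_comp p ((Real.hasDerivAt_sinh (p 0)).fun_pow 2)]
  norm_num

lemma pdG111 (p : Pt) : pd 1 (fun q => modelG q 1 1) p = 0 := by
  have : (fun q : Pt => modelG q 1 1) = fun q => Real.sinh (q 0)^2 := by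
    funext q; simp [modelG]
  rw [this, pd1_comp p ((Real.hasDerivAt_sinh (p 0)).fun_pow 2)]

lemma pdG01 (l : Fin 2) (p : Pt) : pd l (fun q => modelG q 0 1) p = 0 := by
  have : (fun q : Pt => modelG q 0 1) = fun _ => (0:ℝ) := by
    funext q; simp [modelG]
  rw [this, pd_const]

lemma pdG10 (l : Fin 2) (p : Pt) : pd l (fun q => modelG q 1 0) p = 0 := by
  have : (fun q : Pt => modelG q 1 0) = fun _ => (0:ℝ) := by
    funext q; simp [modelG]
  rw [this, pd_const]

lemma christ_val (p : Pt) (hs : Real.sinh (p 0) ≠ 0) (k i j : Fin 2) :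
    christoffel modelG k i j p =
      ![![![2*Real.sinh (p 0)/Real.cosh (p 0), 0], ![0, -Real.sinh (p 0)/Real.cosh (p 0)^3]],
        ![![0, Real.cosh (p 0)/Real.sinh (p 0)], ![Real.cosh (p 0)/Real.sinh (p 0), 0]]] k i j := by
  have hc : Real.cosh (p 0) ≠ 0 := (Real.cosh_pos _).ne'
  fin_cases k <;> fin_cases i <;> fin_cases j <;>
    simp only [christoffel, Fin.sum_univ_two, Fin.mk_zero, Fin.mk_one, modelG_inv p hs, pdG000, pdG100, pdG011, pdG111,
      pdG01, pdG10, Matrix.cons_val_zero, Matrix.cons_val_one, Matrix.head_cons, Matrix.of_apply,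
      Matrix.cons_val', Matrix.head_fin_const, Matrix.empty_val', Matrix.cons_val_fin_one,
      Fin.isValue] <;>
    field_simp <;> ring

lemma pd_congr_pos (p : Pt) (hp : 0 < p 0) (f g : Pt → ℝ) (l : Fin 2)
    (h : ∀ q : Pt, 0 < q 0 → f q = g q) : pd l f p = pd l g p := by
  unfold pd
  have hmem : {q : Pt | 0 < q 0} ∈ nhds p :=
    (isOpen_lt continuous_const (continuous_apply 0)).mem_nhds hp
  rw [Filter.EventuallyEq.fderiv_eq (Filter.eventuallyEq_of_mem hmem h)]

lemma pdC011 (p : Pt) (hp : 0 < p 0) :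
    pd 0 (christoffel modelG 0 1 1) p
      = (3*Real.sinh (p 0)^2 - Real.cosh (p 0)^2)/Real.cosh (p 0)^4 := by
  have hc : Real.cosh (p 0) ≠ 0 := (Real.cosh_pos _).ne'
  rw [pd_congr_pos p hp _ (fun q => -Real.sinh (q 0)/Real.cosh (q 0)^3) 0
    (fun q hq => by simpa using christ_val q (ne_of_gt (Real.sinh_pos_iff.mpr hq)) 0 1 1)]
  have H : HasDerivAt (fun x => -Real.sinh x/Real.cosh x^3)
      ((3*Real.sinh (p 0)^2 - Real.cosh (p 0)^2)/Real.cosh (p 0)^4) (p 0) := by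
    have := ((Real.hasDerivAt_sinh (p 0)).fun_neg.fun_div ((Real.hasDerivAt_cosh (p 0)).fun_pow 3)
      (pow_ne_zero _ hc))
    refine this.congr_deriv ?_
    field_simp
    ring
  exact pd0_comp p H

lemma pdC111 (p : Pt) (hp : 0 < p 0) :
    pd 0 (christoffel modelG 1 1 1) p = 0 := by
  rw [pd_congr_pos p hp _ (fun _ => (0:ℝ)) 0
    (fun q hq => by simpa using christ_val q (ne_of_gt (Real.sinh_pos_iff.mpr hq)) 1 1 1)]
  exact pd_const _ _ _

lemma pdC010 (p : Pt) (hp : 0 < p 0) :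
    pd 1 (christoffel modelG 0 1 0) p = 0 := by
  rw [pd_congr_pos p hp _ (fun _ => (0:ℝ)) 1
    (fun q hq => by simpa using christ_val q (ne_of_gt (Real.sinh_pos_iff.mpr hq)) 0 1 0)]
  exact pd_const _ _ _

lemma pdC110 (p : Pt) (hp : 0 < p 0) :
    pd 1 (christoffel modelG 1 1 0) p = 0 := by
  have hs : Real.sinh (p 0) ≠ 0 := ne_of_gt (Real.sinh_pos_iff.mpr hp)
  rw [pd_congr_pos p hp _ (fun q => Real.cosh (q 0)/Real.sinh (q 0)) 1
    (fun q hq => by simpa using christ_val q (ne_of_gt (Real.sinh_pos_iff.mpr hq)) 1 1 0)]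
  exact pd1_comp p ((Real.hasDerivAt_cosh (p 0)).div (Real.hasDerivAt_sinh (p 0)) hs)

lemma hKd (x : ℝ) : HasDerivAt (fun x => 1/Real.cosh x^2) (-(2*Real.sinh x)/Real.cosh x^3) x := by
  have hc : Real.cosh x ≠ 0 := (Real.cosh_pos _).ne'
  have := (hasDerivAt_const x (1:ℝ)).fun_div ((Real.hasDerivAt_cosh x).fun_pow 2) (pow_ne_zero _ hc)
  refine this.congr_deriv ?_
  field_simp
  ring

lemma pd0k (p : Pt) : pd 0 modelk p = -(2*Real.sinh (p 0))/Real.cosh (p 0)^3 := by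
  unfold modelk; exact pd0_comp p (hKd (p 0))

lemma pd1k (p : Pt) : pd 1 modelk p = 0 := by
  unfold modelk; exact pd1_comp p (hKd (p 0))

lemma hK2d (x : ℝ) : HasDerivAt (fun x => -(2*Real.sinh x)/Real.cosh x^3)
    ((6*Real.sinh x^2 - 2*Real.cosh x^2)/Real.cosh x^4) x := by
  have hc : Real.cosh x ≠ 0 := (Real.cosh_pos _).ne'
  have := (((Real.hasDerivAt_sinh x).const_mul (2:ℝ)).fun_neg.fun_div
    ((Real.hasDerivAt_cosh x).fun_pow 3) (pow_ne_zero _ hc))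
  refine this.congr_deriv ?_
  field_simp
  ring

lemma pd00k (p : Pt) :
    pd 0 (pd 0 modelk) p = (6*Real.sinh (p 0)^2 - 2*Real.cosh (p 0)^2)/Real.cosh (p 0)^4 := by
  have h : pd 0 modelk = fun q : Pt => -(2*Real.sinh (q 0))/Real.cosh (q 0)^3 :=
    funext fun q => pd0k q
  rw [h]
  exact pd0_comp p (hK2d (p 0))

lemma pd10k (p : Pt) : pd 1 (pd 0 modelk) p = 0 := by
  have h : pd 0 modelk = fun q : Pt => -(2*Real.sinh (q 0))/Real.cosh (q 0)^3 :=
    funext fun q => pd0k q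
  rw [h]
  exact pd1_comp p (hK2d (p 0))

lemma pdi1k (i : Fin 2) (p : Pt) : pd i (pd 1 modelk) p = 0 := by
  have h : pd 1 modelk = fun _ : Pt => (0:ℝ) := funext fun q => pd1k q
  rw [h]
  exact pd_const _ _ _

/-- On the half-plane `x > 0`, the metric `g₁ = cosh⁴x dx² + sinh²x dy²` has Gauss curvature
`K = 1/cosh⁴x > 0` and `k = √K = 1/cosh²x` satisfies the Darboux-integrability tensor equation
`(∇²k)ᵢⱼ = (5/(2k)) ∂ᵢk ∂ⱼk - 2k³ gᵢⱼ`. -/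
theorem model_metric_check_13 :
    ∀ p : Pt, 0 < p 0 →
      gaussK modelG p = 1 / Real.cosh (p 0) ^ 4 ∧
      0 < gaussK modelG p ∧
      modelk p = Real.sqrt ( (gaussK modelG p)) ∧
      (∀ i j : Fin 2,
        hess modelG modelk i j p =
          (5 / (2 * modelk p)) * pd i modelk p * pd j modelk p
            - 2 * modelk p ^ 3 * modelG p i j) := by
  intro p hp
  have hc : Real.cosh (p 0) ≠ 0 := (Real.cosh_pos _).ne'
  have hs : Real.sinh (p 0) ≠ 0 := ne_of_gt (Real.sinh_pos_iff.mpr hp)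
  have hK : gaussK modelG p = 1 / Real.cosh (p 0) ^ 4 := by
    simp only [gaussK, R1212, Fin.sum_univ_two, pdC011 p hp, pdC111 p hp, pdC010 p hp,
      pdC110 p hp, christ_val p hs, modelG, Matrix.det_fin_two_of, Matrix.cons_val_zero,
      Matrix.cons_val_one, Matrix.head_cons, Matrix.of_apply, Matrix.cons_val',
      Matrix.empty_val', Matrix.cons_val_fin_one, Fin.isValue]
    field_simp
    ring
  refine ⟨hK, ?_, ?_, ?_⟩
  · rw [hK]; positivity
  · rw [hK, modelk, show (1:ℝ)/Real.cosh (p 0)^4 = (1/Real.cosh (p 0)^2)^2 by ring,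
      Real.sqrt_sq (by positivity)]
  · intro i j
    fin_cases i <;> fin_cases j <;>
      simp only [hess, Fin.sum_univ_two, Fin.mk_zero, Fin.mk_one, christ_val p hs,
        pd00k, pd10k, pdi1k, pd0k, pd1k, modelk, modelG, Matrix.cons_val_zero,
        Matrix.cons_val_one, Matrix.head_cons, Matrix.of_apply, Matrix.cons_val',
        Matrix.empty_val', Matrix.cons_val_fin_one, Fin.isValue] <;>
      field_simp <;>
      ring
end
end

section
/- On the open set D = {(x, φ, θ) ∈ ℝ³ : 0 < x < π/2, 0 < φ < π/2}, define the smooth real-valued functions A = sin θ cot x + cot φ, B = sin θ cot φ + cot x, C = cos θ. Then the 1-form α = A dx + B dφ + C dθ satisfies the Frobenius integrability condition α ∧ dα = 0 on D; explicitly, A(∂_φ C − ∂_θ B) + B(∂_θ A − ∂_x C) + C(∂_x B − ∂_φ A) = 0 identically on D. (This 1-form spans the terminal derived system of the characteristic system V₊ of the Monge–Ampère system encoding the Darboux equation for the metric g₄ = (cos⁴x)dx² + (sin²x)dy².) -/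
noncomputable section
open Real

/-- Partial derivative `∂ᵢ` of a scalar function on `ℝ³` (coordinates `x = p 0`,
`φ = p 1`, `θ = p 2`). -/
def pd3 (i : Fin 3) (f : (Fin 3 → ℝ) → ℝ) : (Fin 3 → ℝ) → ℝ :=
  fun p => fderiv ℝ f p (Pi.single i 1)

/-- `A = sin θ cot x + cot φ`. -/
def Afun : (Fin 3 → ℝ) → ℝ :=
  fun p => Real.sin (p 2) * (Real.cos (p 0) / Real.sin (p 0))
    + Real.cos (p 1) / Real.sin (p 1)

/-- `B = sin θ cot φ + cot x`. -/
def Bfun : (Fin 3 → ℝ) → ℝ :=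
  fun p => Real.sin (p 2) * (Real.cos (p 1) / Real.sin (p 1))
    + Real.cos (p 0) / Real.sin (p 0)

/-- `C = cos θ`. -/
def Cfun : (Fin 3 → ℝ) → ℝ :=
  fun p => Real.cos (p 2)

abbrev prj (i : Fin 3) : (Fin 3 → ℝ) →L[ℝ] ℝ := ContinuousLinearMap.proj i

lemma hcoord (i : Fin 3) (p : Fin 3 → ℝ) :
    HasFDerivAt (fun q : Fin 3 → ℝ => q i) (prj i) p :=
  (prj i).hasFDerivAt

lemma hsin (i : Fin 3) (p : Fin 3 → ℝ) :
    HasFDerivAt (fun q : Fin 3 → ℝ => Real.sin (q i)) (Real.cos (p i) • prj i) p :=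
  by have := (Real.hasDerivAt_sin (p i)).comp_hasFDerivAt p (hcoord i p); exact this

lemma hcos (i : Fin 3) (p : Fin 3 → ℝ) :
    HasFDerivAt (fun q : Fin 3 → ℝ => Real.cos (q i)) ((-Real.sin (p i)) • prj i) p :=
  by have := (Real.hasDerivAt_cos (p i)).comp_hasFDerivAt p (hcoord i p); exact this

lemma hcot (i : Fin 3) (p : Fin 3 → ℝ) (h : Real.sin (p i) ≠ 0) :
    HasFDerivAt (fun q : Fin 3 → ℝ => Real.cos (q i) / Real.sin (q i))
      ((-(1 / Real.sin (p i) ^ 2)) • prj i) p := by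
  have hd : HasDerivAt (fun t => Real.cos t / Real.sin t)
      (-(1 / Real.sin (p i) ^ 2)) (p i) := by
    have := (Real.hasDerivAt_cos (p i)).div (Real.hasDerivAt_sin (p i)) h
    refine this.congr_deriv ?_
    have h1 := Real.sin_sq_add_cos_sq (p i)
    rw [div_eq_iff (pow_ne_zero 2 h)]
    linear_combination -h1 + one_div_mul_cancel (pow_ne_zero 2 h)
  exact hd.comp_hasFDerivAt p (hcoord i p)

lemma hA (p : Fin 3 → ℝ) (h0 : Real.sin (p 0) ≠ 0) (h1 : Real.sin (p 1) ≠ 0) :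
    HasFDerivAt Afun
      ((Real.sin (p 2) • ((-(1 / Real.sin (p 0) ^ 2)) • prj 0)
          + (Real.cos (p 0) / Real.sin (p 0)) • (Real.cos (p 2) • prj 2))
        + (-(1 / Real.sin (p 1) ^ 2)) • prj 1) p :=
  ((hsin 2 p).mul (hcot 0 p h0)).add (hcot 1 p h1)

lemma hB (p : Fin 3 → ℝ) (h0 : Real.sin (p 0) ≠ 0) (h1 : Real.sin (p 1) ≠ 0) :
    HasFDerivAt Bfun
      ((Real.sin (p 2) • ((-(1 / Real.sin (p 1) ^ 2)) • prj 1)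
          + (Real.cos (p 1) / Real.sin (p 1)) • (Real.cos (p 2) • prj 2))
        + (-(1 / Real.sin (p 0) ^ 2)) • prj 0) p :=
  ((hsin 2 p).mul (hcot 1 p h1)).add (hcot 0 p h0)

lemma hC (p : Fin 3 → ℝ) :
    HasFDerivAt Cfun ((-Real.sin (p 2)) • prj 2) p := hcos 2 p

/-- On `D = {0 < x < π/2, 0 < φ < π/2}`, the 1-form `α = A dx + B dφ + C dθ` with
`A = sin θ cot x + cot φ`, `B = sin θ cot φ + cot x`, `C = cos θ` satisfies the Frobenius
condition `α ∧ dα = 0`, expressed by the scalar identity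
`A(∂_φ C − ∂_θ B) + B(∂_θ A − ∂_x C) + C(∂_x B − ∂_φ A) = 0`.
(This 1-form spans the terminal derived system of the characteristic system `V₊` for the
Darboux equation of the metric `g₄ = cos⁴x dx² + sin²x dy²`.) -/
theorem frobenius_terminal_derived_system_g4 :
    ∀ p : Fin 3 → ℝ, 0 < p 0 → p 0 < Real.pi / 2 → 0 < p 1 → p 1 < Real.pi / 2 →
      Afun p * (pd3 1 Cfun p - pd3 2 Bfun p)
        + Bfun p * (pd3 2 Afun p - pd3 0 Cfun p)
        + Cfun p * (pd3 0 Bfun p - pd3 1 Afun p) = 0 := by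
  intro p hx0 hx1 hp0 hp1
  have h0 : Real.sin (p 0) ≠ 0 :=
    ne_of_gt (Real.sin_pos_of_pos_of_lt_pi hx0 (by linarith [Real.pi_pos]))
  have h1 : Real.sin (p 1) ≠ 0 :=
    ne_of_gt (Real.sin_pos_of_pos_of_lt_pi hp0 (by linarith [Real.pi_pos]))
  have eA := (hA p h0 h1).fderiv
  have eB := (hB p h0 h1).fderiv
  have eC := (hC p).fderiv
  simp only [pd3, eA, eB, eC, ContinuousLinearMap.add_apply, ContinuousLinearMap.smul_apply,
    ContinuousLinearMap.proj_apply, Pi.single_eq_same, smul_eq_mul]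
  have e01 : (Pi.single (0 : Fin 3) (1:ℝ) : Fin 3 → ℝ) 1 = 0 := Pi.single_eq_of_ne (by decide) _
  have e02 : (Pi.single (0 : Fin 3) (1:ℝ) : Fin 3 → ℝ) 2 = 0 := Pi.single_eq_of_ne (by decide) _
  have e10 : (Pi.single (1 : Fin 3) (1:ℝ) : Fin 3 → ℝ) 0 = 0 := Pi.single_eq_of_ne (by decide) _
  have e12 : (Pi.single (1 : Fin 3) (1:ℝ) : Fin 3 → ℝ) 2 = 0 := Pi.single_eq_of_ne (by decide) _
  have e20 : (Pi.single (2 : Fin 3) (1:ℝ) : Fin 3 → ℝ) 0 = 0 := Pi.single_eq_of_ne (by decide) _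
  have e21 : (Pi.single (2 : Fin 3) (1:ℝ) : Fin 3 → ℝ) 1 = 0 := Pi.single_eq_of_ne (by decide) _
  simp only [e01, e02, e10, e12, e20, e21, mul_zero, zero_add, add_zero, mul_one]
  simp only [Afun, Bfun, Cfun]
  have hs0 := Real.sin_sq_add_cos_sq (p 0)
  have hs1 := Real.sin_sq_add_cos_sq (p 1)
  field_simp
  linear_combination (Real.sin (p 1) ^ 2 * Real.cos (p 2)) * hs0
    - (Real.sin (p 0) ^ 2 * Real.cos (p 2)) * hs1
end
end
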